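/- arXiv:1309.6693 — 6 statements merged into one kernel-verified Lean document; each statement's English description precedes it below -/
import Mathlib

section
/- Along the system error dynamics and the update law, the Lyapunov function is nonincreasing with derivative d/dt V(e(t), W̃(t)) = −e(t)ᵀ R e(t) ≤ 0 for all t ≥ 0. -/
open Matrix Filter

noncomputable section

/-- Euclidean norm ‖·‖₂ of a vector. -/
def norm2 {n : ℕ} (v : Fin n → ℝ) : ℝ := Real.sqrt (∑ i, v i ^ 2)

/-- Supremum (infinity) norm ‖·‖_∞ of a vector (the sup norm on `Fin n → ℝ`). -/
def normInf {n : ℕ} (v : Fin n → ℝ) : ℝ := ‖v‖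

/-- Frobenius norm ‖·‖_F of a matrix. -/
def normF {N m : ℕ} (W : Matrix (Fin N) (Fin m) ℝ) : ℝ := Real.sqrt (∑ i, ∑ j, W i j ^ 2)

/-- Smallest eigenvalue λ_min of a real symmetric (Hermitian) matrix. -/
def lamMin {n : ℕ} {A : Matrix (Fin n) (Fin n) ℝ} (hA : A.IsHermitian) : ℝ := ⨅ i, hA.eigenvalues i

/-- Largest eigenvalue λ_max of a real symmetric (Hermitian) matrix. -/
def lamMax {n : ℕ} {A : Matrix (Fin n) (Fin n) ℝ} (hA : A.IsHermitian) : ℝ := ⨆ i, hA.eigenvalues i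

/-- A real square matrix is Hurwitz if every (complex) eigenvalue has negative real part. -/
def Hurwitz {n : ℕ} (A : Matrix (Fin n) (Fin n) ℝ) : Prop :=
  ∀ μ : ℂ, (A.map Complex.ofReal).charpoly.IsRoot μ → μ.re < 0

/-- The Lyapunov function V(e, W̃) = eᵀ P e + γ⁻¹ tr((W̃ Λ^{1/2})ᵀ (W̃ Λ^{1/2})). -/
def Vlyap {n N m : ℕ} (γ : ℝ) (P : Matrix (Fin n) (Fin n) ℝ)
    (Lhalf : Matrix (Fin m) (Fin m) ℝ) (e : Fin n → ℝ) (W : Matrix (Fin N) (Fin m) ℝ) : ℝ :=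
  e ⬝ᵥ (P *ᵥ e) + γ⁻¹ * ((W * Lhalf)ᵀ * (W * Lhalf)).trace

/-- The augmented Lyapunov function V* of Theorem 5.1. -/
def Vstar {n N m : ℕ} (γ κ η ξ : ℝ) (P R : Matrix (Fin n) (Fin n) ℝ)
    (hP : P.IsHermitian) (hR : R.IsHermitian)
    (Lhalf : Matrix (Fin m) (Fin m) ℝ)
    (e : Fin n → ℝ) (W : Matrix (Fin N) (Fin m) ℝ) (eL xt : Fin n → ℝ) : ℝ :=
  Vlyap γ P Lhalf e W + η⁻¹ * κ * (eL ⬝ᵥ (P *ᵥ eL))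
    + 2 * ξ * κ⁻¹ * (lamMax hP)⁻¹ * lamMin hR * (xt ⬝ᵥ (P *ᵥ xt))

theorem statement0
    {n N m : ℕ} (hn : 0 < n) (hN : 0 < N) (hm : 0 < m)
    (Ar : Matrix (Fin n) (Fin n) ℝ) (B : Matrix (Fin n) (Fin m) ℝ)
    (Lam Lhalf : Matrix (Fin m) (Fin m) ℝ) (R P : Matrix (Fin n) (Fin n) ℝ)
    (hAr : Hurwitz Ar)
    (hLam : Lam.PosDef) (hLamDiag : Lam.IsDiag)
    (hLhalfDiag : Lhalf.IsDiag) (hLhalfSq : Lhalf * Lhalf = Lam)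
    (hR : R.PosDef) (hP : P.PosDef)
    (hLyap : Arᵀ * P + P * Ar + R = 0)
    (γ : ℝ) (hγ : 0 < γ)
    (σx : ℝ → Fin N → ℝ)
    (e : ℝ → Fin n → ℝ) (Wt : ℝ → Matrix (Fin N) (Fin m) ℝ)
    (he : ∀ t ≥ (0:ℝ), HasDerivAt e (Ar *ᵥ e t - (B * Lam * (Wt t)ᵀ) *ᵥ σx t) t)
    (hW : ∀ t ≥ (0:ℝ), ∀ i j, HasDerivAt (fun s => Wt s i j)
          (γ * (σx t i * ((e t) ᵥ* (P * B)) j)) t)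
    : ∀ t ≥ (0:ℝ),
      HasDerivAt (fun s => Vlyap γ P Lhalf (e s) (Wt s)) (-(e t ⬝ᵥ (R *ᵥ e t))) t
      ∧ -(e t ⬝ᵥ (R *ᵥ e t)) ≤ 0 := by
  intro t ht
  set σ : Fin N → ℝ := σx t with hσ
  set W : Matrix (Fin N) (Fin m) ℝ := Wt t with hWt
  set ed : Fin n → ℝ := Ar *ᵥ e t - (B * Lam * Wᵀ) *ᵥ σ with hed
  have hei : ∀ i, HasDerivAt (fun s => e s i) (ed i) t := fun i =>
    (hasDerivAt_pi.mp (he t ht)) i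
  -- v = eᵀ P B
  set v : Fin m → ℝ := (e t) ᵥ* (P * B) with hv
  -- diagonal facts
  have hdiagL : ∀ (M : Matrix (Fin N) (Fin m) ℝ) i j, (M * Lhalf) i j = M i j * Lhalf j j := by
    intro M i j
    rw [Matrix.mul_apply]
    exact Finset.sum_eq_single j (fun k _ hk => by rw [hLhalfDiag hk, mul_zero]) (by simp)
  have hLamLhalf : ∀ j, Lhalf j j * Lhalf j j = Lam j j := by
    intro j
    have h := congrFun (congrFun hLhalfSq j) j
    rw [Matrix.mul_apply] at h
    have hs : ∑ k, Lhalf j k * Lhalf k j = Lhalf j j * Lhalf j j := by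
      refine Finset.sum_eq_single j (fun k _ hk => ?_) (fun h => absurd (Finset.mem_univ _) h)
      rw [hLhalfDiag hk, mul_zero]
    rw [← h]
    exact hs.symm
  -- rewrite Vlyap as explicit sums
  have hVform : ∀ s, Vlyap γ P Lhalf (e s) (Wt s)
      = (∑ i, e s i * ∑ j, P i j * e s j) + γ⁻¹ * ∑ j, ∑ i, (Wt s i j * Lhalf j j) ^ 2 := by
    intro s
    have htr : ((Wt s * Lhalf)ᵀ * (Wt s * Lhalf)).trace
        = ∑ j, ∑ i, (Wt s i j * Lhalf j j) ^ 2 := by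
      rw [Matrix.trace]
      refine Finset.sum_congr rfl fun j _ => ?_
      rw [Matrix.diag_apply, Matrix.mul_apply]
      refine Finset.sum_congr rfl fun i _ => ?_
      rw [Matrix.transpose_apply, hdiagL, sq]
    rw [Vlyap, htr]
    congr 1
  -- derivative of the quadratic part
  have hV1 : HasDerivAt (fun s => ∑ i, e s i * ∑ j, P i j * e s j)
      (∑ i, (ed i * ∑ j, P i j * e t j + e t i * ∑ j, P i j * ed j)) t := by
    refine HasDerivAt.fun_sum fun i _ => ?_
    exact (hei i).mul (HasDerivAt.fun_sum fun j _ => (hei j).const_mul (P i j))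
  -- derivative of the trace part
  have hV2 : HasDerivAt (fun s => γ⁻¹ * ∑ j, ∑ i, (Wt s i j * Lhalf j j) ^ 2)
      (γ⁻¹ * ∑ j, ∑ i, ((2:ℝ) * (W i j * Lhalf j j) ^ 1 * (γ * (σ i * v j) * Lhalf j j))) t := by
    refine HasDerivAt.const_mul _ (HasDerivAt.fun_sum fun j _ => HasDerivAt.fun_sum fun i _ => ?_)
    exact ((hW t ht i j).mul_const (Lhalf j j)).pow 2
  have hV := hV1.fun_add hV2
  have hfun : (fun s => Vlyap γ P Lhalf (e s) (Wt s))
      = fun s => (∑ i, e s i * ∑ j, P i j * e s j) + γ⁻¹ * ∑ j, ∑ i, (Wt s i j * Lhalf j j) ^ 2 :=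
    funext hVform
  rw [← hfun] at hV
  -- now identify the derivative value
  set u : Fin n → ℝ := (B * Lam * Wᵀ) *ᵥ σ with hu
  have hPsym : Pᵀ = P := hP.isHermitian
  have hquad : (∑ i, (ed i * ∑ j, P i j * e t j + e t i * ∑ j, P i j * ed j))
      = ed ⬝ᵥ (P *ᵥ e t) + e t ⬝ᵥ (P *ᵥ ed) := by
    rw [Finset.sum_add_distrib]
    simp [dotProduct, Matrix.mulVec]
  have hArP : Arᵀ * P + P * Ar = -R := by
    have := hLyap
    linear_combination (norm := abel) this
  have hcross : u ⬝ᵥ (P *ᵥ e t) = e t ⬝ᵥ (P *ᵥ u) := by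
    rw [Matrix.dotProduct_mulVec, ← Matrix.mulVec_transpose, hPsym, dotProduct_comm]
  have hPu : e t ⬝ᵥ (P *ᵥ u) = ∑ j, ∑ i, σ i * W i j * v j * Lam j j := by
    rw [hu, Matrix.mulVec_mulVec, Matrix.dotProduct_mulVec]
    have : e t ᵥ* (P * (B * Lam * Wᵀ)) = (v ᵥ* Lam) ᵥ* Wᵀ := by
      rw [hv, Matrix.vecMul_vecMul, Matrix.vecMul_vecMul, Matrix.mul_assoc, Matrix.mul_assoc]
    rw [this]
    rw [dotProduct]
    rw [Finset.sum_comm]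
    refine Finset.sum_congr rfl fun j _ => ?_
    simp only [Matrix.vecMul, dotProduct, Matrix.transpose_apply, Finset.sum_mul]
    refine Finset.sum_congr rfl fun i _ => ?_
    refine (Finset.sum_eq_single i (fun k _ hk => ?_) (by simp)).trans (by ring)
    rw [hLamDiag hk]
    ring
  have htrace : γ⁻¹ * ∑ j, ∑ i, ((2:ℝ) * (W i j * Lhalf j j) ^ 1 * (γ * (σ i * v j) * Lhalf j j))
      = 2 * ∑ j, ∑ i, σ i * W i j * v j * Lam j j := by
    rw [Finset.mul_sum, Finset.mul_sum]
    refine Finset.sum_congr rfl fun j _ => ?_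
    rw [Finset.mul_sum, Finset.mul_sum]
    refine Finset.sum_congr rfl fun i _ => ?_
    rw [← hLamLhalf j, pow_one,
      show γ⁻¹ * (2 * (W i j * Lhalf j j) * (γ * (σ i * v j) * Lhalf j j))
        = (γ⁻¹ * γ) * (2 * (σ i * W i j * v j * (Lhalf j j * Lhalf j j))) from by ring,
      inv_mul_cancel₀ hγ.ne', one_mul]
  have hDeq : (∑ i, (ed i * ∑ j, P i j * e t j + e t i * ∑ j, P i j * ed j))
      + γ⁻¹ * ∑ j, ∑ i, ((2:ℝ) * (W i j * Lhalf j j) ^ 1 * (γ * (σ i * v j) * Lhalf j j))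
      = -(e t ⬝ᵥ (R *ᵥ e t)) := by
    rw [hquad, htrace, ← hPu]
    have h1 : ed ⬝ᵥ (P *ᵥ e t) = (Ar *ᵥ e t) ⬝ᵥ (P *ᵥ e t) - u ⬝ᵥ (P *ᵥ e t) := by
      rw [hed, sub_dotProduct]
    have h2 : e t ⬝ᵥ (P *ᵥ ed) = e t ⬝ᵥ (P *ᵥ (Ar *ᵥ e t)) - e t ⬝ᵥ (P *ᵥ u) := by
      rw [hed, Matrix.mulVec_sub, dotProduct_sub]
    have h3 : (Ar *ᵥ e t) ⬝ᵥ (P *ᵥ e t) + e t ⬝ᵥ (P *ᵥ (Ar *ᵥ e t)) = -(e t ⬝ᵥ (R *ᵥ e t)) := by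
      have ha : (Ar *ᵥ e t) ⬝ᵥ (P *ᵥ e t) = e t ⬝ᵥ ((Arᵀ * P) *ᵥ e t) := by
        rw [Matrix.dotProduct_mulVec, Matrix.dotProduct_mulVec, ← Matrix.vecMul_vecMul,
          ← Matrix.vecMul_transpose]
      have hb : e t ⬝ᵥ (P *ᵥ (Ar *ᵥ e t)) = e t ⬝ᵥ ((P * Ar) *ᵥ e t) := by
        rw [Matrix.mulVec_mulVec]
      rw [ha, hb, ← dotProduct_add, ← Matrix.add_mulVec, hArP, Matrix.neg_mulVec,
        dotProduct_neg]
    rw [h1, h2, hcross]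
    rw [show (Ar *ᵥ e t) ⬝ᵥ (P *ᵥ e t) - e t ⬝ᵥ (P *ᵥ u) + (e t ⬝ᵥ (P *ᵥ (Ar *ᵥ e t)) - e t ⬝ᵥ (P *ᵥ u)) + 2 * (e t ⬝ᵥ (P *ᵥ u))
      = (Ar *ᵥ e t) ⬝ᵥ (P *ᵥ e t) + e t ⬝ᵥ (P *ᵥ (Ar *ᵥ e t)) by ring, h3]
  rw [hDeq] at hV
  refine ⟨hV, ?_⟩
  have h0 : 0 ≤ e t ⬝ᵥ (R *ᵥ e t) := by
    have := hR.posSemidef.dotProduct_mulVec_nonneg (e t)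
    simpa using this
  linarith
end
end

section
/- For all t ≥ 0, V(e(t), W̃(t)) ≤ V(e(0), W̃(0)); consequently the system error satisfies ‖e(t)‖₂ ≤ √( V(e(0), W̃(0)) / λ_min(P) ) for all t ≥ 0. -/
open Matrix Filter

noncomputable section

/-- Rayleigh-type lower bound: λ_min(P) ‖x‖² ≤ xᵀ P x. -/
lemma rayleigh_lower_aux {n : ℕ} {P : Matrix (Fin n) (Fin n) ℝ} (hP : P.IsHermitian)
    (x : Fin n → ℝ) :
    (⨅ i, hP.eigenvalues i) * (∑ i, x i ^ 2) ≤ x ⬝ᵥ (P *ᵥ x) := by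
  classical
  cases Nat.eq_zero_or_pos n with
  | inl h => subst h; simp [dotProduct]
  | inr hn =>
  have hinst : Nonempty (Fin n) := ⟨⟨0, hn⟩⟩
  set U : Matrix (Fin n) (Fin n) ℝ := (hP.eigenvectorUnitary : Matrix (Fin n) (Fin n) ℝ) with hU
  have hstar : star U = Uᵀ := by
    simp [Matrix.star_eq_conjTranspose, Matrix.conjTranspose_eq_transpose_of_trivial]
  set y : Fin n → ℝ := Uᵀ *ᵥ x with hy
  have hUU : U * Uᵀ = 1 := by
    have := (Matrix.mem_unitaryGroup_iff).mp hP.eigenvectorUnitary.2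
    rwa [← hU, hstar] at this
  have hspec : P = U * diagonal hP.eigenvalues * Uᵀ := by
    have := hP.spectral_theorem
    rw [Unitary.conjStarAlgAut_apply, ← hU, hstar] at this
    simpa using this
  have key : x ⬝ᵥ (P *ᵥ x) = ∑ i, hP.eigenvalues i * (y i)^2 := by
    conv_lhs => rw [hspec]
    simp only [← Matrix.mulVec_mulVec]
    rw [Matrix.dotProduct_mulVec]
    have hxU : x ᵥ* U = y := by rw [hy, Matrix.mulVec_transpose]
    rw [hxU]
    simp [Matrix.mulVec_diagonal, dotProduct, pow_two]
    exact Finset.sum_congr rfl fun i _ => by ring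
  have hyy : ∑ i, (y i)^2 = ∑ i, x i ^ 2 := by
    have : y ⬝ᵥ y = x ⬝ᵥ x := by
      rw [hy, Matrix.dotProduct_mulVec, Matrix.vecMul_transpose, Matrix.mulVec_mulVec, hUU,
        Matrix.one_mulVec]
    simpa [dotProduct, pow_two] using this
  rw [key, ← hyy, Finset.mul_sum]
  apply Finset.sum_le_sum
  intro i _
  have h1 : (⨅ j, hP.eigenvalues j) ≤ hP.eigenvalues i := ciInf_le (Finite.bddBelow_range _) i
  nlinarith [sq_nonneg (y i)]

lemma trace_mul_vecMulVec_aux {ι κ : Type*} [Fintype ι] [Fintype κ]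
    (M : Matrix ι κ ℝ) (a : κ → ℝ) (b : ι → ℝ) :
    (M * Matrix.vecMulVec a b).trace = b ⬝ᵥ (M *ᵥ a) := by
  simp only [Matrix.trace, Matrix.diag, Matrix.mul_apply, Matrix.vecMulVec_apply, dotProduct,
    Matrix.mulVec, Finset.mul_sum]
  refine Finset.sum_congr rfl fun i _ => Finset.sum_congr rfl fun j _ => by ring

lemma trace_transpose_mul_aux {N m : ℕ} (A C : Matrix (Fin N) (Fin m) ℝ) :
    (Aᵀ * C).trace = ∑ k, ∑ j, A j k * C j k := by
  simp only [Matrix.trace, Matrix.diag, Matrix.mul_apply, Matrix.transpose_apply]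

theorem statement1
    {n N m : ℕ} (hn : 0 < n) (hN : 0 < N) (hm : 0 < m)
    (Ar : Matrix (Fin n) (Fin n) ℝ) (B : Matrix (Fin n) (Fin m) ℝ)
    (Lam Lhalf : Matrix (Fin m) (Fin m) ℝ) (R P : Matrix (Fin n) (Fin n) ℝ)
    (hAr : Hurwitz Ar)
    (hLam : Lam.PosDef) (hLamDiag : Lam.IsDiag)
    (hLhalfDiag : Lhalf.IsDiag) (hLhalfSq : Lhalf * Lhalf = Lam)
    (hR : R.PosDef) (hP : P.PosDef)
    (hLyap : Arᵀ * P + P * Ar + R = 0)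
    (γ : ℝ) (hγ : 0 < γ)
    (σx : ℝ → Fin N → ℝ)
    (e : ℝ → Fin n → ℝ) (Wt : ℝ → Matrix (Fin N) (Fin m) ℝ)
    (he : ∀ t ≥ (0:ℝ), HasDerivAt e (Ar *ᵥ e t - (B * Lam * (Wt t)ᵀ) *ᵥ σx t) t)
    (hW : ∀ t ≥ (0:ℝ), ∀ i j, HasDerivAt (fun s => Wt s i j)
          (γ * (σx t i * ((e t) ᵥ* (P * B)) j)) t)
    : ∀ t ≥ (0:ℝ),
      Vlyap γ P Lhalf (e t) (Wt t) ≤ Vlyap γ P Lhalf (e 0) (Wt 0)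
      ∧ norm2 (e t) ≤ Real.sqrt (Vlyap γ P Lhalf (e 0) (Wt 0) / lamMin hP.1) := by
  classical
  have hPT : Pᵀ = P := by
    have := hP.1
    rwa [Matrix.IsHermitian, Matrix.conjTranspose_eq_transpose_of_trivial] at this
  have hLT : Lhalfᵀ = Lhalf := hLhalfDiag.isSymm
  have hsym : ∀ u w : Fin n → ℝ, u ⬝ᵥ (P *ᵥ w) = (P *ᵥ u) ⬝ᵥ w := by
    intro u w
    rw [Matrix.dotProduct_mulVec]
    conv_lhs => rw [← hPT]
    rw [Matrix.vecMul_transpose]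
  set V : ℝ → ℝ := fun s => Vlyap γ P Lhalf (e s) (Wt s) with hV
  -- derivative of V
  have hVd : ∀ t ∈ Set.Ici (0:ℝ), HasDerivAt V (-(e t ⬝ᵥ (R *ᵥ e t))) t := by
    intro t ht
    replace ht : (0:ℝ) ≤ t := ht
    set d : Fin n → ℝ := Ar *ᵥ e t - (B * Lam * (Wt t)ᵀ) *ᵥ σx t with hd
    have hei : ∀ i, HasDerivAt (fun s => e s i) (d i) t := fun i => hasDerivAt_pi.mp (he t ht) i
    set v : Fin m → ℝ := (e t) ᵥ* (P * B) with hv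
    set Wd : Matrix (Fin N) (Fin m) ℝ := γ • Matrix.vecMulVec (σx t) v with hWd
    have hWdi : ∀ i j, HasDerivAt (fun s => Wt s i j) (Wd i j) t := by
      intro i j
      have := hW t ht i j
      simpa [hWd, Matrix.vecMulVec_apply, mul_assoc] using this
    have h1 : HasDerivAt (fun s => e s ⬝ᵥ (P *ᵥ e s)) (d ⬝ᵥ (P *ᵥ e t) + e t ⬝ᵥ (P *ᵥ d)) t := by
      have hfun : (fun s => e s ⬝ᵥ (P *ᵥ e s)) = fun s => ∑ i, e s i * ∑ j, P i j * e s j := by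
        funext s; simp [dotProduct, Matrix.mulVec]
      rw [hfun]
      have h := HasDerivAt.fun_sum (fun i (_ : i ∈ Finset.univ) =>
        (hei i).mul (HasDerivAt.fun_sum (fun j (_ : j ∈ Finset.univ) => (hei j).const_mul (P i j))))
      refine h.congr_deriv ?_
      simp [dotProduct, Matrix.mulVec, Finset.sum_add_distrib]
    have h2 : HasDerivAt (fun s => ((Wt s * Lhalf)ᵀ * (Wt s * Lhalf)).trace)
        (∑ k, ∑ j, ((∑ l, Wd j l * Lhalf l k) * (∑ l, Wt t j l * Lhalf l k)
          + (∑ l, Wt t j l * Lhalf l k) * (∑ l, Wd j l * Lhalf l k))) t := by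
      have hfun : (fun s => ((Wt s * Lhalf)ᵀ * (Wt s * Lhalf)).trace)
          = fun s => ∑ k, ∑ j, (∑ l, Wt s j l * Lhalf l k) * (∑ l, Wt s j l * Lhalf l k) := by
        funext s
        rw [trace_transpose_mul_aux]
        refine Finset.sum_congr rfl fun k _ => Finset.sum_congr rfl fun j _ => ?_
        simp [Matrix.mul_apply]
      rw [hfun]
      refine HasDerivAt.fun_sum fun k _ => HasDerivAt.fun_sum fun j _ => ?_
      have hg : HasDerivAt (fun s => ∑ l, Wt s j l * Lhalf l k) (∑ l, Wd j l * Lhalf l k) t :=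
        HasDerivAt.fun_sum fun l _ => (hWdi j l).mul_const (Lhalf l k)
      exact hg.mul hg
    have h := h1.add (h2.const_mul γ⁻¹)
    have hVfun : V = fun s => e s ⬝ᵥ (P *ᵥ e s)
        + γ⁻¹ * ((Wt s * Lhalf)ᵀ * (Wt s * Lhalf)).trace := by
      funext s; simp [hV, Vlyap]
    rw [hVfun]
    refine h.congr_deriv ?_
    -- the algebraic identity
    set q : Fin n → ℝ := (B * Lam * (Wt t)ᵀ) *ᵥ σx t with hq
    set X : ℝ := e t ⬝ᵥ (P *ᵥ q) with hX
    have hS : (∑ k, ∑ j, ((∑ l, Wd j l * Lhalf l k) * (∑ l, Wt t j l * Lhalf l k)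
          + (∑ l, Wt t j l * Lhalf l k) * (∑ l, Wd j l * Lhalf l k)))
        = ((Wd * Lhalf)ᵀ * (Wt t * Lhalf)).trace + ((Wt t * Lhalf)ᵀ * (Wd * Lhalf)).trace := by
      rw [trace_transpose_mul_aux, trace_transpose_mul_aux, ← Finset.sum_add_distrib]
      refine Finset.sum_congr rfl fun k _ => ?_
      rw [← Finset.sum_add_distrib]
      refine Finset.sum_congr rfl fun j _ => ?_
      simp [Matrix.mul_apply]
    have htr1 : ((Wd * Lhalf)ᵀ * (Wt t * Lhalf)).trace
        = ((Wt t * Lhalf)ᵀ * (Wd * Lhalf)).trace := by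
      rw [← Matrix.trace_transpose, Matrix.transpose_mul, Matrix.transpose_transpose]
    have hXv : X = v ⬝ᵥ ((Lam * (Wt t)ᵀ) *ᵥ σx t) := by
      rw [hX, hq, hv, Matrix.mul_assoc B Lam, ← Matrix.mulVec_mulVec,
        Matrix.mulVec_mulVec _ P B, Matrix.dotProduct_mulVec]
    have htr2 : ((Wt t * Lhalf)ᵀ * (Wd * Lhalf)).trace = γ * X := by
      rw [Matrix.transpose_mul, hLT, Matrix.trace_mul_comm, hWd, Matrix.smul_mul,
        Matrix.smul_mul, Matrix.trace_smul, Matrix.mul_assoc (Matrix.vecMulVec (σx t) v),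
        ← Matrix.mul_assoc Lhalf Lhalf, hLhalfSq, Matrix.trace_mul_comm,
        trace_mul_vecMulVec_aux, ← hXv, smul_eq_mul]
    have hdPe : d ⬝ᵥ (P *ᵥ e t) + e t ⬝ᵥ (P *ᵥ d) = -(e t ⬝ᵥ (R *ᵥ e t)) - 2 * X := by
      have hA1 : (Ar *ᵥ e t) ⬝ᵥ (P *ᵥ e t) = e t ⬝ᵥ ((Arᵀ * P) *ᵥ e t) := by
        rw [← Matrix.mulVec_mulVec, Matrix.dotProduct_mulVec (e t) Arᵀ, Matrix.vecMul_transpose]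
      have hA2 : e t ⬝ᵥ (P *ᵥ (Ar *ᵥ e t)) = e t ⬝ᵥ ((P * Ar) *ᵥ e t) := by
        rw [Matrix.mulVec_mulVec]
      have hq1 : q ⬝ᵥ (P *ᵥ e t) = X := by rw [hsym, dotProduct_comm, ← hX]
      have hmain : e t ⬝ᵥ ((Arᵀ * P) *ᵥ e t) + e t ⬝ᵥ ((P * Ar) *ᵥ e t)
          = -(e t ⬝ᵥ (R *ᵥ e t)) := by
        rw [← dotProduct_add, ← Matrix.add_mulVec,
          show Arᵀ * P + P * Ar = -R from eq_neg_of_add_eq_zero_left hLyap,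
          Matrix.neg_mulVec, dotProduct_neg]
      rw [hd, sub_dotProduct, Matrix.mulVec_sub, dotProduct_sub, hA1, hA2, hq1,
        ← hX]
      linarith [hmain]
    rw [hS, htr1, htr2, hdPe]
    field_simp
    ring
  -- monotonicity
  have hRnn : ∀ u : Fin n → ℝ, 0 ≤ u ⬝ᵥ (R *ᵥ u) := by
    intro u
    have := hR.posSemidef.dotProduct_mulVec_nonneg u
    simpa using this
  have hmono : AntitoneOn V (Set.Ici 0) := by
    apply antitoneOn_of_deriv_nonpos (convex_Ici 0)
    · exact fun x hx => ((hVd x hx).continuousAt).continuousWithinAt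
    · rw [interior_Ici]
      exact fun x hx => ((hVd x (Set.mem_Ici.mpr (le_of_lt hx))).differentiableAt).differentiableWithinAt
    · rw [interior_Ici]
      intro x hx
      rw [(hVd x (Set.mem_Ici.mpr (le_of_lt hx))).deriv]
      simpa using hRnn (e x)
  have hVle : ∀ t ≥ (0:ℝ), V t ≤ V 0 := fun t ht =>
    hmono (Set.self_mem_Ici) (show t ∈ Set.Ici (0:ℝ) from ht) ht
  -- lower bound on V by quadratic form
  have htrnn : ∀ s : ℝ, 0 ≤ ((Wt s * Lhalf)ᵀ * (Wt s * Lhalf)).trace := by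
    intro s
    rw [trace_transpose_mul_aux]
    exact Finset.sum_nonneg fun k _ => Finset.sum_nonneg fun j _ => mul_self_nonneg _
  have hquad : ∀ s : ℝ, e s ⬝ᵥ (P *ᵥ e s) ≤ V s := by
    intro s
    have := mul_nonneg (le_of_lt (inv_pos.mpr hγ)) (htrnn s)
    simp only [hV, Vlyap]
    linarith
  have hlmin : 0 < lamMin hP.1 := by
    haveI : Nonempty (Fin n) := ⟨⟨0, hn⟩⟩
    have h1 := Set.Nonempty.csInf_mem (Set.range_nonempty hP.1.eigenvalues) (Set.finite_range _)
    rw [sInf_range] at h1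
    obtain ⟨i, hi⟩ := h1
    rw [lamMin, ← hi]
    exact hP.eigenvalues_pos i
  intro t ht
  have hVt : V t ≤ V 0 := hVle t ht
  refine ⟨hVt, ?_⟩
  have hray : lamMin hP.1 * (∑ i, e t i ^ 2) ≤ e t ⬝ᵥ (P *ᵥ e t) := rayleigh_lower_aux hP.1 (e t)
  have hsum : (∑ i, e t i ^ 2) ≤ V 0 / lamMin hP.1 := by
    rw [le_div_iff₀ hlmin]
    calc (∑ i, e t i ^ 2) * lamMin hP.1 = lamMin hP.1 * (∑ i, e t i ^ 2) := by ring
      _ ≤ e t ⬝ᵥ (P *ᵥ e t) := hray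
      _ ≤ V t := hquad t
      _ ≤ V 0 := hVt
  exact Real.sqrt_le_sqrt hsum
end
end

section
/- (Remark 3.1) If e(0) = 0, then the system error satisfies the uniform transient bound sup_{t ≥ 0} ‖e(t)‖_∞ ≤ ‖W̃(0) Λ^{1/2}‖_F / √(γ λ_min(P)); in particular, the bound tends to 0 as the learning rate γ → ∞. -/
open Matrix Filter

noncomputable section

section aux

lemma rayleigh {n : ℕ} [NeZero n] {P : Matrix (Fin n) (Fin n) ℝ} (hP : P.IsHermitian)
    (x : Fin n → ℝ) : (⨅ i, hP.eigenvalues i) * (x ⬝ᵥ x) ≤ x ⬝ᵥ P *ᵥ x := by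
  classical
  set U : Matrix (Fin n) (Fin n) ℝ := (hP.eigenvectorUnitary : Matrix (Fin n) (Fin n) ℝ) with hU
  have hUs : U * star U = 1 := (Matrix.mem_unitaryGroup_iff).mp hP.eigenvectorUnitary.2
  have hUt : star U = Uᵀ := by
    rw [Matrix.star_eq_conjTranspose]; ext i j; simp [Matrix.conjTranspose_apply]
  set y : Fin n → ℝ := star U *ᵥ x with hy
  have hxU : x ᵥ* U = y := by rw [hy, hUt, Matrix.mulVec_transpose]
  have hyy : y ⬝ᵥ y = x ⬝ᵥ x := by
    conv_lhs => rw [Matrix.dotProduct_mulVec, hUt, Matrix.vecMul_transpose, hy,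
      Matrix.mulVec_mulVec, hUs, Matrix.one_mulVec]
  have hPx : x ⬝ᵥ P *ᵥ x = ∑ i, hP.eigenvalues i * y i ^ 2 := by
    conv_lhs => rw [hP.spectral_theorem, Unitary.conjStarAlgAut_apply, ← hU, ← Matrix.mulVec_mulVec, ← Matrix.mulVec_mulVec,
      Matrix.dotProduct_mulVec, hxU, ← hy]
    simp [Matrix.mulVec_diagonal, dotProduct]
    exact Finset.sum_congr rfl fun i _ => by ring
  rw [hPx, ← hyy]
  have hb : BddBelow (Set.range hP.eigenvalues) := Set.Finite.bddBelow (Set.finite_range _)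
  have h2 : (⨅ i, hP.eigenvalues i) * (y ⬝ᵥ y) = ∑ i, (⨅ i, hP.eigenvalues i) * y i ^ 2 := by
    simp [dotProduct, Finset.mul_sum]
    exact Finset.sum_congr rfl fun i _ => by ring
  rw [h2]
  exact Finset.sum_le_sum fun i _ => mul_le_mul_of_nonneg_right (ciInf_le hb i) (sq_nonneg _)

lemma keyid2 {n N m : ℕ} (Ar : Matrix (Fin n) (Fin n) ℝ) (B : Matrix (Fin n) (Fin m) ℝ)
    (Lam Lhalf : Matrix (Fin m) (Fin m) ℝ) (R P : Matrix (Fin n) (Fin n) ℝ)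
    (hLamDiag : Lam.IsDiag) (hLhalfDiag : Lhalf.IsDiag) (hLhalfSq : Lhalf * Lhalf = Lam)
    (hPH : P.IsHermitian) (hLyap : Arᵀ * P + P * Ar + R = 0)
    (γ : ℝ) (hγ : 0 < γ) (σ : Fin N → ℝ) (ev : Fin n → ℝ) (W : Matrix (Fin N) (Fin m) ℝ) :
    (∑ i, ∑ j, ((Ar *ᵥ ev - (B * Lam * Wᵀ) *ᵥ σ) i * (P i j * ev j)
        + ev i * (P i j * (Ar *ᵥ ev - (B * Lam * Wᵀ) *ᵥ σ) j)))
      + γ⁻¹ * (∑ i, ∑ j, (2:ℕ) * (W i j * Lhalf j j) ^ (2-1)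
          * (γ * (σ i * (ev ᵥ* (P * B)) j) * Lhalf j j))
      = -(ev ⬝ᵥ R *ᵥ ev) := by
  have hPt : Pᵀ = P := by have h : P.IsSymm := (by simpa using hPH); exact h
  set f : Fin n → ℝ := Ar *ᵥ ev - (B * Lam * Wᵀ) *ᵥ σ with hf
  set M : Matrix (Fin n) (Fin N) ℝ := B * Lam * Wᵀ with hM
  set u : Fin m → ℝ := ev ᵥ* (P * B) with hu
  have e1 : (∑ i, ∑ j, (f i * (P i j * ev j) + ev i * (P i j * f j)))
      = f ⬝ᵥ (P *ᵥ ev) + ev ⬝ᵥ (P *ᵥ f) := by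
    simp [dotProduct, Matrix.mulVec, Finset.mul_sum, Finset.sum_add_distrib]
  have hLL : ∀ j, Lhalf j j * Lhalf j j = Lam j j := by
    intro j
    rw [← hLhalfSq, Matrix.mul_apply, Finset.sum_eq_single j]
    · intro k _ hk; rw [hLhalfDiag (Ne.symm hk), zero_mul]
    · simp
  have e2 : γ⁻¹ * (∑ i, ∑ j, (2:ℕ) * (W i j * Lhalf j j) ^ (2-1)
          * (γ * (σ i * u j) * Lhalf j j))
      = 2 * (ev ⬝ᵥ ((P * M) *ᵥ σ)) := by
    have hPM : P * M = ((P * B) * Lam) * Wᵀ := by simp [hM, Matrix.mul_assoc]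
    rw [hPM, Matrix.dotProduct_mulVec, ← Matrix.vecMul_vecMul, ← Matrix.vecMul_vecMul, ← hu]
    have hs : (u ᵥ* Lam) ᵥ* Wᵀ ⬝ᵥ σ = ∑ i, ∑ j, u j * Lam j j * W i j * σ i := by
      simp only [dotProduct, Matrix.vecMul, Matrix.transpose_apply]
      refine Finset.sum_congr rfl fun i _ => ?_
      rw [Finset.sum_mul]
      refine Finset.sum_congr rfl fun j _ => ?_
      have hd : (∑ x, u x * Lam x j) = u j * Lam j j := by
        rw [Finset.sum_eq_single j]
        · intro k _ hk; rw [hLamDiag hk, mul_zero]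
        · simp
      rw [hd]
    rw [hs, Finset.mul_sum, Finset.mul_sum]
    refine Finset.sum_congr rfl fun i _ => ?_
    rw [Finset.mul_sum, Finset.mul_sum]
    refine Finset.sum_congr rfl fun j _ => ?_
    have hterm : (2:ℕ) * (W i j * Lhalf j j) ^ (2-1) * (γ * (σ i * u j) * Lhalf j j)
        = γ * (2 * (u j * Lam j j * W i j * σ i)) := by
      push_cast
      rw [← hLL j]; ring
    rw [hterm, inv_mul_cancel_left₀ hγ.ne']
  rw [e1, e2]
  have hA : f ⬝ᵥ (P *ᵥ ev) = ev ⬝ᵥ ((Arᵀ * P) *ᵥ ev) - ev ⬝ᵥ ((P * M) *ᵥ σ) := by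
    rw [hf, sub_dotProduct]
    congr 1
    · rw [← Matrix.mulVec_mulVec, Matrix.dotProduct_mulVec (v := ev),
        show Ar *ᵥ ev = ev ᵥ* Arᵀ from (Matrix.vecMul_transpose Ar ev).symm]
    · rw [dotProduct_comm, Matrix.dotProduct_mulVec,
        show P *ᵥ ev = ev ᵥ* P from by rw [← hPt, Matrix.mulVec_transpose, hPt],
        Matrix.vecMul_vecMul, ← Matrix.dotProduct_mulVec]
  have hB : ev ⬝ᵥ (P *ᵥ f) = ev ⬝ᵥ ((P * Ar) *ᵥ ev) - ev ⬝ᵥ ((P * M) *ᵥ σ) := by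
    rw [hf, Matrix.mulVec_sub, dotProduct_sub, Matrix.mulVec_mulVec, Matrix.mulVec_mulVec]
  have hsum : ev ⬝ᵥ ((Arᵀ * P) *ᵥ ev) + ev ⬝ᵥ ((P * Ar) *ᵥ ev) = -(ev ⬝ᵥ R *ᵥ ev) := by
    have h : Arᵀ * P + P * Ar = -R := by linear_combination (norm := noncomm_ring) hLyap
    rw [← dotProduct_add, ← Matrix.add_mulVec, h, Matrix.neg_mulVec,
      dotProduct_neg]
  rw [hA, hB]
  linarith [hsum]

lemma sqrt_tendsto_atTop : Tendsto Real.sqrt atTop atTop := by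
  rw [Filter.tendsto_atTop_atTop]
  intro b
  refine ⟨b ^ 2, fun a ha => ?_⟩
  calc b ≤ |b| := le_abs_self b
  _ = Real.sqrt (b ^ 2) := (Real.sqrt_sq_eq_abs b).symm
  _ ≤ Real.sqrt a := Real.sqrt_le_sqrt ha

end aux

theorem statement2
    {n N m : ℕ} (hn : 0 < n) (hN : 0 < N) (hm : 0 < m)
    (Ar : Matrix (Fin n) (Fin n) ℝ) (B : Matrix (Fin n) (Fin m) ℝ)
    (Lam Lhalf : Matrix (Fin m) (Fin m) ℝ) (R P : Matrix (Fin n) (Fin n) ℝ)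
    (hAr : Hurwitz Ar)
    (hLam : Lam.PosDef) (hLamDiag : Lam.IsDiag)
    (hLhalfDiag : Lhalf.IsDiag) (hLhalfSq : Lhalf * Lhalf = Lam)
    (hR : R.PosDef) (hP : P.PosDef)
    (hLyap : Arᵀ * P + P * Ar + R = 0)
    (γ : ℝ) (hγ : 0 < γ)
    (σx : ℝ → Fin N → ℝ)
    (e : ℝ → Fin n → ℝ) (Wt : ℝ → Matrix (Fin N) (Fin m) ℝ)
    (he : ∀ t ≥ (0:ℝ), HasDerivAt e (Ar *ᵥ e t - (B * Lam * (Wt t)ᵀ) *ᵥ σx t) t)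
    (hW : ∀ t ≥ (0:ℝ), ∀ i j, HasDerivAt (fun s => Wt s i j)
          (γ * (σx t i * ((e t) ᵥ* (P * B)) j)) t)
    (he0 : e 0 = 0)
    : (∀ t ≥ (0:ℝ), normInf (e t) ≤ normF (Wt 0 * Lhalf) / Real.sqrt (γ * lamMin hP.1))
      ∧ Tendsto (fun g : ℝ => normF (Wt 0 * Lhalf) / Real.sqrt (g * lamMin hP.1))
          atTop (nhds 0) := by
  haveI : NeZero n := ⟨hn.ne'⟩
  set F : ℝ := normF (Wt 0 * Lhalf) with hF
  set c : ℝ := lamMin hP.1 with hc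
  have hF0 : 0 ≤ F := Real.sqrt_nonneg _
  have hcpos : 0 < c := by
    obtain ⟨i0, hi0⟩ := exists_eq_ciInf_of_finite (f := hP.1.eigenvalues)
    rw [hc, lamMin, ← hi0]
    exact hP.eigenvalues_pos i0
  constructor
  · -- transient bound
    set V : ℝ → ℝ := fun s => (∑ i, ∑ j, e s i * (P i j * e s j))
        + γ⁻¹ * ∑ i, ∑ j, (Wt s i j * Lhalf j j) ^ 2 with hV
    have hVd : ∀ t ≥ (0:ℝ), HasDerivAt V (-(e t ⬝ᵥ R *ᵥ e t)) t := by
      intro t ht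
      have he' := hasDerivAt_pi.mp (he t ht)
      have h1 : HasDerivAt (fun s => ∑ i, ∑ j, e s i * (P i j * e s j))
          (∑ i, ∑ j, ((Ar *ᵥ e t - (B * Lam * (Wt t)ᵀ) *ᵥ σx t) i * (P i j * e t j)
            + e t i * (P i j * (Ar *ᵥ e t - (B * Lam * (Wt t)ᵀ) *ᵥ σx t) j))) t :=
        HasDerivAt.fun_sum fun i _ => HasDerivAt.fun_sum fun j _ =>
          (he' i).mul ((he' j).const_mul (P i j))
      have h2 : HasDerivAt (fun s => ∑ i, ∑ j, (Wt s i j * Lhalf j j) ^ 2)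
          (∑ i, ∑ j, (2:ℕ) * (Wt t i j * Lhalf j j) ^ (2-1)
            * (γ * (σx t i * ((e t) ᵥ* (P * B)) j) * Lhalf j j)) t :=
        HasDerivAt.fun_sum fun i _ => HasDerivAt.fun_sum fun j _ =>
          ((hW t ht i j).mul_const (Lhalf j j)).pow 2
      have h3 := h1.add (h2.const_mul γ⁻¹)
      have hkey := keyid2 Ar B Lam Lhalf R P hLamDiag hLhalfDiag hLhalfSq hP.1 hLyap γ hγ
        (σx t) (e t) (Wt t)
      rw [hV]
      exact hkey ▸ h3
    have hVc : ContinuousOn V (Set.Ici (0:ℝ)) :=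
      fun t ht => (hVd t ht).continuousAt.continuousWithinAt
    have hRq : ∀ v : Fin n → ℝ, 0 ≤ v ⬝ᵥ R *ᵥ v := fun v => by
      simpa using hR.posSemidef.dotProduct_mulVec_nonneg v
    have anti : AntitoneOn V (Set.Ici (0:ℝ)) := by
      refine antitoneOn_of_deriv_nonpos (convex_Ici 0) hVc ?_ ?_
      · intro x hx
        rw [interior_Ici] at hx
        exact (hVd x hx.le).differentiableAt.differentiableWithinAt
      · intro x hx
        rw [interior_Ici] at hx
        rw [(hVd x hx.le).deriv]
        exact neg_nonpos.2 (hRq (e x))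
    have hV0 : V 0 = γ⁻¹ * F ^ 2 := by
      have hF2 : F ^ 2 = ∑ i, ∑ j, (Wt 0 i j * Lhalf j j) ^ 2 := by
        rw [hF, normF, Real.sq_sqrt (by positivity)]
        refine Finset.sum_congr rfl fun i _ => Finset.sum_congr rfl fun j _ => ?_
        rw [Matrix.mul_apply, Finset.sum_eq_single j]
        · intro k _ hk; rw [hLhalfDiag hk, mul_zero]
        · simp
      rw [hV]
      simp [he0, hF2]
    intro t ht
    have hVle : V t ≤ V 0 := anti Set.self_mem_Ici ht ht
    have hQV : e t ⬝ᵥ P *ᵥ e t ≤ V t := by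
      have h1 : (∑ i, ∑ j, e t i * (P i j * e t j)) = e t ⬝ᵥ P *ᵥ e t := by
        simp [dotProduct, Matrix.mulVec, Finset.mul_sum]
      rw [hV]
      simp only
      rw [h1]
      have : (0:ℝ) ≤ γ⁻¹ * ∑ i, ∑ j, (Wt t i j * Lhalf j j) ^ 2 := by positivity
      linarith
    have hray : c * (e t ⬝ᵥ e t) ≤ e t ⬝ᵥ P *ᵥ e t := rayleigh hP.1 (e t)
    have hee : e t ⬝ᵥ e t ≤ F ^ 2 / (γ * c) := by
      rw [hV0] at hVle
      rw [div_eq_inv_mul, mul_inv]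
      have := le_trans hray (le_trans hQV hVle)
      calc e t ⬝ᵥ e t = c⁻¹ * (c * (e t ⬝ᵥ e t)) := by
            field_simp
        _ ≤ c⁻¹ * (γ⁻¹ * F ^ 2) := by
            apply mul_le_mul_of_nonneg_left this (by positivity)
        _ = γ⁻¹ * c⁻¹ * F ^ 2 := by ring
    rw [normInf]
    have hrpos : (0:ℝ) ≤ F / Real.sqrt (γ * c) := by positivity
    rw [pi_norm_le_iff_of_nonneg hrpos]
    intro i
    rw [Real.norm_eq_abs, ← Real.sqrt_sq_eq_abs]
    have hi2 : e t i ^ 2 ≤ F ^ 2 / (γ * c) := by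
      refine le_trans ?_ hee
      have : e t ⬝ᵥ e t = ∑ j, e t j ^ 2 := by
        simp [dotProduct]; exact Finset.sum_congr rfl fun j _ => (sq (e t j)).symm
      rw [this]
      exact Finset.single_le_sum (f := fun j => e t j ^ 2) (fun j _ => sq_nonneg _) (Finset.mem_univ i)
    calc Real.sqrt (e t i ^ 2) ≤ Real.sqrt (F ^ 2 / (γ * c)) := Real.sqrt_le_sqrt hi2
      _ = Real.sqrt (F ^ 2) / Real.sqrt (γ * c) := Real.sqrt_div (by positivity) _
      _ = F / Real.sqrt (γ * c) := by rw [Real.sqrt_sq hF0]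
  · -- limit as γ → ∞
    refine Tendsto.div_atTop tendsto_const_nhds ?_
    exact sqrt_tendsto_atTop.comp (Tendsto.atTop_mul_const hcpos tendsto_id)
end
end

section
/- If σx is bounded on [0,∞), then the system error converges asymptotically to zero: e(t) → 0 as t → ∞. -/
open Matrix Filter

set_option maxHeartbeats 1000000

noncomputable section

lemma quad_cont {n : ℕ} (P : Matrix (Fin n) (Fin n) ℝ) :
    Continuous fun x : Fin n → ℝ => x ⬝ᵥ (P *ᵥ x) := by
  simp only [dotProduct, mulVec]
  fun_prop

lemma quad_lower {n : ℕ} (hn : 0 < n) {P : Matrix (Fin n) (Fin n) ℝ} (hP : P.PosDef) :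
    ∃ c > 0, ∀ x : Fin n → ℝ, c * ‖x‖ ^ 2 ≤ x ⬝ᵥ (P *ᵥ x) := by
  have hS : IsCompact (Metric.sphere (0 : Fin n → ℝ) 1) := isCompact_sphere _ _
  have hne : (Metric.sphere (0 : Fin n → ℝ) 1).Nonempty := by
    refine ⟨fun _ => 1, ?_⟩
    have : Nonempty (Fin n) := ⟨⟨0, hn⟩⟩
    simp [mem_sphere_iff_norm]
  obtain ⟨x₀, hx₀S, hmin⟩ := hS.exists_isMinOn hne ((quad_cont P).continuousOn)
  have hx₀ : ‖x₀‖ = 1 := by simpa [mem_sphere_iff_norm] using hx₀S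
  have hx₀ne : x₀ ≠ 0 := by intro h; rw [h] at hx₀; simp at hx₀
  refine ⟨x₀ ⬝ᵥ (P *ᵥ x₀), by simpa using hP.dotProduct_mulVec_pos hx₀ne, fun x => ?_⟩
  rcases eq_or_ne x 0 with rfl | hx
  · simp
  · have hxn : (0:ℝ) < ‖x‖ := norm_pos_iff.2 hx
    set u := ‖x‖⁻¹ • x with hu
    have huS : u ∈ Metric.sphere (0 : Fin n → ℝ) 1 := by
      simp [mem_sphere_iff_norm, hu, norm_smul, abs_of_pos (inv_pos.2 hxn), inv_mul_cancel₀ hxn.ne']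
    have hxu : x = ‖x‖ • u := by
      rw [hu, smul_smul, mul_inv_cancel₀ hxn.ne', one_smul]
    have hscale : x ⬝ᵥ (P *ᵥ x) = ‖x‖ ^ 2 * (u ⬝ᵥ (P *ᵥ u)) := by
      conv_lhs => rw [hxu]
      rw [smul_dotProduct, mulVec_smul, dotProduct_smul]
      simp [smul_eq_mul]; ring
    rw [hscale, mul_comm (‖x‖^2)]
    exact mul_le_mul_of_nonneg_right (hmin huS) (sq_nonneg ‖x‖)


lemma quad_abs_le {n p : ℕ} (M : Matrix (Fin n) (Fin p) ℝ) (x : Fin n → ℝ) (y : Fin p → ℝ) :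
    |x ⬝ᵥ (M *ᵥ y)| ≤ (∑ i, ∑ j, |M i j|) * ‖x‖ * ‖y‖ := by
  simp only [dotProduct, mulVec]
  calc |∑ i, x i * ∑ j, M i j * y j| ≤ ∑ i, |x i * ∑ j, M i j * y j| := Finset.abs_sum_le_sum_abs _ _
    _ ≤ ∑ i, ∑ j, |M i j| * ‖x‖ * ‖y‖ := by
        refine Finset.sum_le_sum fun i _ => ?_
        rw [abs_mul]
        calc |x i| * |∑ j, M i j * y j| ≤ ‖x‖ * ∑ j, |M i j| * ‖y‖ := by
              refine mul_le_mul (norm_le_pi_norm x i |>.trans_eq' (Real.norm_eq_abs _).symm)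
                ((Finset.abs_sum_le_sum_abs _ _).trans (Finset.sum_le_sum fun j _ => ?_))
                (abs_nonneg _) (norm_nonneg _)
              rw [abs_mul]
              exact mul_le_mul_of_nonneg_left ((norm_le_pi_norm y j).trans_eq' (Real.norm_eq_abs _).symm) (abs_nonneg _)
          _ = ∑ j, |M i j| * ‖x‖ * ‖y‖ := by rw [Finset.mul_sum]; exact Finset.sum_congr rfl fun j _ => by ring
    _ = (∑ i, ∑ j, |M i j|) * ‖x‖ * ‖y‖ := by rw [Finset.sum_mul, Finset.sum_mul]; exact Finset.sum_congr rfl fun i _ => by rw [Finset.sum_mul, Finset.sum_mul]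


lemma Vderiv_algebra
    {n N m : ℕ}
    (Ar : Matrix (Fin n) (Fin n) ℝ) (B : Matrix (Fin n) (Fin m) ℝ)
    (Lam : Matrix (Fin m) (Fin m) ℝ) (R P : Matrix (Fin n) (Fin n) ℝ)
    (hLamDiag : Lam.IsDiag)
    (hR : R.PosDef) (hP : P.PosDef)
    (hLyap : Arᵀ * P + P * Ar + R = 0)
    (γ : ℝ) (hγ : 0 < γ)
    (v : Fin n → ℝ) (W : Matrix (Fin N) (Fin m) ℝ) (s : Fin N → ℝ) :
    (Ar *ᵥ v - (B * Lam * Wᵀ) *ᵥ s) ⬝ᵥ (P *ᵥ v) + v ⬝ᵥ (P *ᵥ (Ar *ᵥ v - (B * Lam * Wᵀ) *ᵥ s))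
      + γ⁻¹ * ∑ i, ∑ j, Lam j j * (2 * W i j * (γ * (s i * (v ᵥ* (P * B)) j)))
      = -(v ⬝ᵥ (R *ᵥ v)) := by
  have hPT : Pᵀ = P := hP.isHermitian.eq
  have hRT : Rᵀ = R := hR.isHermitian.eq
  set M : Matrix (Fin n) (Fin N) ℝ := B * Lam * Wᵀ with hM
  set u : Fin m → ℝ := v ᵥ* (P * B) with hu
  -- pure part
  have pure1 : (Ar *ᵥ v) ⬝ᵥ (P *ᵥ v) + v ⬝ᵥ (P *ᵥ (Ar *ᵥ v)) = -(v ⬝ᵥ (R *ᵥ v)) := by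
    have h1 : (Ar *ᵥ v) ⬝ᵥ (P *ᵥ v) = (v ᵥ* (Arᵀ * P)) ⬝ᵥ v := by
      rw [← vecMul_transpose Ar v, dotProduct_mulVec, vecMul_vecMul]
    have h2 : v ⬝ᵥ (P *ᵥ (Ar *ᵥ v)) = (v ᵥ* (P * Ar)) ⬝ᵥ v := by
      rw [mulVec_mulVec, dotProduct_mulVec]
    have hsum : Arᵀ * P + P * Ar = -R := eq_neg_of_add_eq_zero_left hLyap
    rw [h1, h2, ← add_dotProduct, ← vecMul_add, hsum, vecMul_neg, neg_dotProduct,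
      ← dotProduct_mulVec]
  -- cross part
  have cross1 : (M *ᵥ s) ⬝ᵥ (P *ᵥ v) = (v ᵥ* (P * M)) ⬝ᵥ s := by
    rw [dotProduct_comm, dotProduct_mulVec, ← vecMul_transpose P v, hPT, vecMul_vecMul]
  have cross2 : v ⬝ᵥ (P *ᵥ (M *ᵥ s)) = (v ᵥ* (P * M)) ⬝ᵥ s := by
    rw [mulVec_mulVec, dotProduct_mulVec]
  -- term2
  have hdiag : ∀ (f : Fin m → ℝ) (j : Fin m), (f ᵥ* Lam) j = f j * Lam j j := by
    intro f j
    simp only [vecMul, dotProduct]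
    exact Finset.sum_eq_single j (fun k _ hk => by rw [hLamDiag hk, mul_zero]) (by simp)
  have term2 : γ⁻¹ * ∑ i, ∑ j, Lam j j * (2 * W i j * (γ * (s i * u j)))
      = 2 * ((v ᵥ* (P * M)) ⬝ᵥ s) := by
    have hvm : v ᵥ* (P * M) = W *ᵥ (u ᵥ* Lam) := by
      rw [hM, hu]
      rw [show P * (B * Lam * Wᵀ) = ((P * B) * Lam) * Wᵀ by
            rw [← Matrix.mul_assoc, ← Matrix.mul_assoc], ← vecMul_vecMul,
        ← vecMul_vecMul, vecMul_transpose]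
    rw [hvm, dotProduct_comm, dotProduct, Finset.mul_sum, Finset.mul_sum]
    refine Finset.sum_congr rfl fun i _ => ?_
    simp only [mulVec, dotProduct, hdiag, Finset.mul_sum]
    refine Finset.sum_congr rfl fun j _ => ?_
    field_simp
  rw [sub_dotProduct, mulVec_sub, dotProduct_sub, cross1, cross2, term2]
  rw [show ∀ a b c : ℝ, a - c + (b - c) + 2*c = a + b by intros; ring]
  exact pure1


lemma mulVec_norm_le {n p : ℕ} (A : Matrix (Fin n) (Fin p) ℝ) (x : Fin p → ℝ) :
    ‖A *ᵥ x‖ ≤ (∑ i, ∑ j, |A i j|) * ‖x‖ := by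
  have hnn : 0 ≤ (∑ i, ∑ j, |A i j|) * ‖x‖ :=
    mul_nonneg (Finset.sum_nonneg fun i _ => Finset.sum_nonneg fun j _ => abs_nonneg _)
      (norm_nonneg _)
  rw [pi_norm_le_iff_of_nonneg hnn]
  intro i
  rw [Real.norm_eq_abs]
  calc |(A *ᵥ x) i| ≤ ∑ j, |A i j| * ‖x‖ := by
        rw [mulVec, dotProduct]
        refine (Finset.abs_sum_le_sum_abs _ _).trans (Finset.sum_le_sum fun j _ => ?_)
        rw [abs_mul]
        exact mul_le_mul_of_nonneg_left
          ((norm_le_pi_norm x j).trans_eq' (Real.norm_eq_abs _).symm) (abs_nonneg _)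
    _ = (∑ j, |A i j|) * ‖x‖ := (Finset.sum_mul _ _ _).symm
    _ ≤ (∑ i, ∑ j, |A i j|) * ‖x‖ := by
        refine mul_le_mul_of_nonneg_right ?_ (norm_nonneg _)
        exact Finset.single_le_sum (f := fun i => ∑ j, |A i j|)
          (fun i _ => Finset.sum_nonneg fun j _ => abs_nonneg _) (Finset.mem_univ i)

lemma quad_hasderiv {n : ℕ} (P : Matrix (Fin n) (Fin n) ℝ) (e : ℝ → Fin n → ℝ)
    (ed : Fin n → ℝ) (t : ℝ) (het : HasDerivAt e ed t) :
    HasDerivAt (fun s => e s ⬝ᵥ (P *ᵥ e s)) (ed ⬝ᵥ (P *ᵥ e t) + e t ⬝ᵥ (P *ᵥ ed)) t := by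
  have hei : ∀ i, HasDerivAt (fun s => e s i) (ed i) t := hasDerivAt_pi.1 het
  have : HasDerivAt (fun s => ∑ i, ∑ j, e s i * (P i j * e s j))
      (∑ i, ∑ j, (ed i * (P i j * e t j) + e t i * (P i j * ed j))) t := by
    refine HasDerivAt.fun_sum fun i _ => HasDerivAt.fun_sum fun j _ => ?_
    exact (hei i).mul ((hei j).const_mul (P i j))
  convert this using 1
  · ext s; simp [dotProduct, mulVec, Finset.mul_sum]
  · simp only [Finset.sum_add_distrib, dotProduct, mulVec, Finset.mul_sum]


lemma Vhasderiv
    {n N m : ℕ}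
    (Ar : Matrix (Fin n) (Fin n) ℝ) (B : Matrix (Fin n) (Fin m) ℝ)
    (Lam : Matrix (Fin m) (Fin m) ℝ) (P : Matrix (Fin n) (Fin n) ℝ)
    (γ : ℝ)
    (σx : ℝ → Fin N → ℝ) (e : ℝ → Fin n → ℝ) (Wt : ℝ → Matrix (Fin N) (Fin m) ℝ)
    (t : ℝ)
    (het : HasDerivAt e (Ar *ᵥ e t - (B * Lam * (Wt t)ᵀ) *ᵥ σx t) t)
    (hWt : ∀ i j, HasDerivAt (fun s => Wt s i j)
          (γ * (σx t i * ((e t) ᵥ* (P * B)) j)) t) :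
    HasDerivAt (fun s => e s ⬝ᵥ (P *ᵥ e s) + γ⁻¹ * ∑ i, ∑ j, Lam j j * (Wt s i j) ^ 2)
      ((Ar *ᵥ e t - (B * Lam * (Wt t)ᵀ) *ᵥ σx t) ⬝ᵥ (P *ᵥ e t)
        + e t ⬝ᵥ (P *ᵥ (Ar *ᵥ e t - (B * Lam * (Wt t)ᵀ) *ᵥ σx t))
        + γ⁻¹ * ∑ i, ∑ j, Lam j j * (2 * Wt t i j * (γ * (σx t i * ((e t) ᵥ* (P * B)) j)))) t := by
  set ed := Ar *ᵥ e t - (B * Lam * (Wt t)ᵀ) *ᵥ σx t with hed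
  have hei : ∀ i, HasDerivAt (fun s => e s i) (ed i) t := hasDerivAt_pi.1 het
  have part1 : HasDerivAt (fun s => e s ⬝ᵥ (P *ᵥ e s)) (ed ⬝ᵥ (P *ᵥ e t) + e t ⬝ᵥ (P *ᵥ ed)) t := by
    have : HasDerivAt (fun s => ∑ i, ∑ j, e s i * (P i j * e s j))
        (∑ i, ∑ j, (ed i * (P i j * e t j) + e t i * (P i j * ed j))) t := by
      refine HasDerivAt.fun_sum fun i _ => HasDerivAt.fun_sum fun j _ => ?_
      exact (hei i).mul ((hei j).const_mul (P i j))
    convert this using 1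
    · ext s; simp [dotProduct, mulVec, Finset.mul_sum]
    · simp only [Finset.sum_add_distrib, dotProduct, mulVec, Finset.mul_sum]
  have part2 : HasDerivAt (fun s => γ⁻¹ * ∑ i, ∑ j, Lam j j * (Wt s i j) ^ 2)
      (γ⁻¹ * ∑ i, ∑ j, Lam j j * (2 * Wt t i j * (γ * (σx t i * ((e t) ᵥ* (P * B)) j)))) t := by
    refine HasDerivAt.const_mul _ ?_
    refine HasDerivAt.fun_sum fun i _ => HasDerivAt.fun_sum fun j _ => ?_
    have := ((hWt i j).fun_pow 2).const_mul (Lam j j)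
    convert this using 1
    · rfl
    push_cast
    ring
  exact part1.add part2

theorem statement3
    {n N m : ℕ} (hn : 0 < n) (hN : 0 < N) (hm : 0 < m)
    (Ar : Matrix (Fin n) (Fin n) ℝ) (B : Matrix (Fin n) (Fin m) ℝ)
    (Lam Lhalf : Matrix (Fin m) (Fin m) ℝ) (R P : Matrix (Fin n) (Fin n) ℝ)
    (hAr : Hurwitz Ar)
    (hLam : Lam.PosDef) (hLamDiag : Lam.IsDiag)
    (hLhalfDiag : Lhalf.IsDiag) (hLhalfSq : Lhalf * Lhalf = Lam)
    (hR : R.PosDef) (hP : P.PosDef)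
    (hLyap : Arᵀ * P + P * Ar + R = 0)
    (γ : ℝ) (hγ : 0 < γ)
    (σx : ℝ → Fin N → ℝ)
    (e : ℝ → Fin n → ℝ) (Wt : ℝ → Matrix (Fin N) (Fin m) ℝ)
    (he : ∀ t ≥ (0:ℝ), HasDerivAt e (Ar *ᵥ e t - (B * Lam * (Wt t)ᵀ) *ᵥ σx t) t)
    (hW : ∀ t ≥ (0:ℝ), ∀ i j, HasDerivAt (fun s => Wt s i j)
          (γ * (σx t i * ((e t) ᵥ* (P * B)) j)) t)
    (hσ : ∃ C : ℝ, ∀ t ≥ (0:ℝ), norm2 (σx t) ≤ C)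
    : Tendsto e atTop (nhds 0) := by
  classical
  -- sup-norm bound on σx
  obtain ⟨C, hC⟩ := hσ
  set Cs : ℝ := max C 0 with hCs
  have hCs0 : 0 ≤ Cs := le_max_right _ _
  have hsnorm : ∀ t ≥ (0:ℝ), ‖σx t‖ ≤ Cs := by
    intro t ht
    rw [pi_norm_le_iff_of_nonneg hCs0]
    intro i
    rw [Real.norm_eq_abs, ← Real.sqrt_sq_eq_abs]
    have h1 : Real.sqrt ((σx t i) ^ 2) ≤ norm2 (σx t) :=
      Real.sqrt_le_sqrt (Finset.single_le_sum (fun j _ => sq_nonneg (σx t j)) (Finset.mem_univ i))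
    exact h1.trans ((hC t ht).trans (le_max_left _ _))
  -- diagonal entries of Λ are positive
  have hLamPos : ∀ j, 0 < Lam j j := by
    intro j
    have hne : (Pi.single j 1 : Fin m → ℝ) ≠ 0 := by
      intro h
      have := congrFun h j
      simp at this
    have := hLam.dotProduct_mulVec_pos hne
    simpa [dotProduct, mulVec, Pi.single_apply, star_trivial] using this
  -- quadratic form bounds
  obtain ⟨cP, hcP, hQP⟩ := quad_lower hn hP
  obtain ⟨cR, hcR, hQR⟩ := quad_lower hn hR
  -- the Lyapunov function and the dissipation rate
  set V : ℝ → ℝ := fun t => e t ⬝ᵥ (P *ᵥ e t) + γ⁻¹ * ∑ i, ∑ j, Lam j j * (Wt t i j) ^ 2 with hVdef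
  set h : ℝ → ℝ := fun t => e t ⬝ᵥ (R *ᵥ e t) with hhdef
  set ed : ℝ → Fin n → ℝ := fun t => Ar *ᵥ e t - (B * Lam * (Wt t)ᵀ) *ᵥ σx t with heddef
  have hh0 : ∀ t, 0 ≤ h t := fun t =>
    le_trans (mul_nonneg hcR.le (sq_nonneg _)) (hQR (e t))
  have hVd : ∀ t ≥ (0:ℝ), HasDerivAt V (-(h t)) t := by
    intro t ht
    have hd := Vhasderiv Ar B Lam P γ σx e Wt t (he t ht) (hW t ht)
    have halg := Vderiv_algebra Ar B Lam R P hLamDiag hR hP hLyap γ hγ (e t) (Wt t) (σx t)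
    show HasDerivAt V (-(e t ⬝ᵥ (R *ᵥ e t))) t
    rw [← halg]
    exact hd
  -- trace term is nonnegative
  have htr : ∀ t, 0 ≤ γ⁻¹ * ∑ i, ∑ j, Lam j j * (Wt t i j) ^ 2 := by
    intro t
    refine mul_nonneg (inv_nonneg.2 hγ.le) ?_
    exact Finset.sum_nonneg fun i _ => Finset.sum_nonneg fun j _ =>
      mul_nonneg (hLamPos j).le (sq_nonneg _)
  have hV0 : ∀ t, 0 ≤ V t := fun t =>
    add_nonneg (le_trans (mul_nonneg hcP.le (sq_nonneg _)) (hQP (e t))) (htr t)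
  -- V is antitone on [0, ∞)
  have hVanti : AntitoneOn V (Set.Ici 0) := by
    refine antitoneOn_of_deriv_nonpos (convex_Ici 0) ?_ ?_ ?_
    · exact fun t ht => ((hVd t ht).continuousAt).continuousWithinAt
    · intro t ht
      rw [interior_Ici] at ht
      exact ((hVd t (le_of_lt ht)).differentiableAt).differentiableWithinAt
    · intro t ht
      rw [interior_Ici] at ht
      rw [(hVd t (le_of_lt ht)).deriv]
      exact neg_nonpos.2 (hh0 t)
  have hVle : ∀ t ≥ (0:ℝ), V t ≤ V 0 := fun t ht =>
    hVanti Set.self_mem_Ici ht ht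
  -- bound on ‖e t‖
  set Me : ℝ := Real.sqrt (V 0 / cP) with hMe
  have heb : ∀ t ≥ (0:ℝ), ‖e t‖ ≤ Me := by
    intro t ht
    have h1 : cP * ‖e t‖ ^ 2 ≤ V 0 :=
      le_trans (hQP (e t)) (le_trans (le_add_of_nonneg_right (htr t)) (hVle t ht))
    have h2 : ‖e t‖ ^ 2 ≤ V 0 / cP := (le_div_iff₀' hcP).2 h1
    rw [hMe, ← Real.sqrt_sq (norm_nonneg (e t))]
    exact Real.sqrt_le_sqrt h2
  -- bound on the entries of Wt
  set CW : Fin m → ℝ := fun j => Real.sqrt (γ * V 0 / Lam j j) with hCW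
  have hWb : ∀ t ≥ (0:ℝ), ∀ i j, |Wt t i j| ≤ CW j := by
    intro t ht i j
    have h1 : γ⁻¹ * (Lam j j * (Wt t i j) ^ 2) ≤ V 0 := by
      refine le_trans ?_ (hVle t ht)
      refine le_add_of_nonneg_of_le (le_trans (mul_nonneg hcP.le (sq_nonneg _)) (hQP (e t))) ?_
      refine mul_le_mul_of_nonneg_left ?_ (inv_nonneg.2 hγ.le)
      calc Lam j j * (Wt t i j) ^ 2 ≤ ∑ j', Lam j' j' * (Wt t i j') ^ 2 :=
            Finset.single_le_sum (f := fun j' => Lam j' j' * (Wt t i j') ^ 2)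
              (fun j' _ => mul_nonneg (hLamPos j').le (sq_nonneg _)) (Finset.mem_univ j)
        _ ≤ ∑ i', ∑ j', Lam j' j' * (Wt t i' j') ^ 2 :=
            Finset.single_le_sum (f := fun i' => ∑ j', Lam j' j' * (Wt t i' j') ^ 2)
              (fun i' _ => Finset.sum_nonneg fun j' _ => mul_nonneg (hLamPos j').le (sq_nonneg _))
              (Finset.mem_univ i)
    have h1' : Lam j j * (Wt t i j) ^ 2 ≤ γ * V 0 := by
      have := mul_le_mul_of_nonneg_left h1 hγ.le
      rwa [← mul_assoc, mul_inv_cancel₀ hγ.ne', one_mul] at this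
    have h2 : (Wt t i j) ^ 2 ≤ γ * V 0 / Lam j j := by
      rw [le_div_iff₀ (hLamPos j), mul_comm]
      exact h1'
    rw [← Real.sqrt_sq_eq_abs]
    exact Real.sqrt_le_sqrt h2
  have hCW0 : ∀ j, 0 ≤ CW j := fun j => Real.sqrt_nonneg _
  have hMe0 : 0 ≤ Me := Real.sqrt_nonneg _
  -- bound on ‖ed t‖
  set CA : ℝ := ∑ i, ∑ j, |Ar i j| with hCA
  have hCA0 : 0 ≤ CA := Finset.sum_nonneg fun i _ => Finset.sum_nonneg fun j _ => abs_nonneg _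
  set CM : ℝ := ∑ _i : Fin n, ∑ _k : Fin N, (∑ j, |(B * Lam) _i j| * CW j) with hCM
  have hCM0 : 0 ≤ CM := Finset.sum_nonneg fun i _ => Finset.sum_nonneg fun k _ =>
    Finset.sum_nonneg fun j _ => mul_nonneg (abs_nonneg _) (hCW0 j)
  set Med : ℝ := CA * Me + CM * Cs with hMed
  have hedb : ∀ t ≥ (0:ℝ), ‖ed t‖ ≤ Med := by
    intro t ht
    have hb1 : ‖Ar *ᵥ e t‖ ≤ CA * Me := by
      refine (mulVec_norm_le Ar (e t)).trans ?_
      exact mul_le_mul_of_nonneg_left (heb t ht) hCA0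
    have hentry : ∀ i k, |(B * Lam * (Wt t)ᵀ) i k| ≤ ∑ j, |(B * Lam) i j| * CW j := by
      intro i k
      rw [Matrix.mul_apply]
      refine (Finset.abs_sum_le_sum_abs _ _).trans (Finset.sum_le_sum fun j _ => ?_)
      rw [abs_mul]
      exact mul_le_mul_of_nonneg_left (by simpa using hWb t ht k j) (abs_nonneg _)
    have hb2 : ‖(B * Lam * (Wt t)ᵀ) *ᵥ σx t‖ ≤ CM * Cs := by
      refine (mulVec_norm_le _ _).trans ?_
      refine mul_le_mul ?_ (hsnorm t ht) (norm_nonneg _) hCM0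
      exact Finset.sum_le_sum fun i _ => Finset.sum_le_sum fun k _ => hentry i k
    calc ‖ed t‖ ≤ ‖Ar *ᵥ e t‖ + ‖(B * Lam * (Wt t)ᵀ) *ᵥ σx t‖ := norm_sub_le _ _
      _ ≤ CA * Me + CM * Cs := add_le_add hb1 hb2
  -- derivative of h and its bound
  set CR : ℝ := ∑ i, ∑ j, |R i j| with hCR
  set K : ℝ := CR * Med * Me + CR * Me * Med with hK
  set dh : ℝ → ℝ := fun t => ed t ⬝ᵥ (R *ᵥ e t) + e t ⬝ᵥ (R *ᵥ ed t) with hdhdef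
  have hhd : ∀ t ≥ (0:ℝ), HasDerivAt h (dh t) t := fun t ht =>
    quad_hasderiv R e (ed t) t (he t ht)
  have hdhb : ∀ t ≥ (0:ℝ), ‖dh t‖ ≤ K := by
    intro t ht
    rw [Real.norm_eq_abs]
    refine (abs_add_le _ _).trans (add_le_add ?_ ?_)
    · refine (quad_abs_le R (ed t) (e t)).trans ?_
      rw [← hCR]
      have hCR0 : 0 ≤ CR := hCR ▸ (Finset.sum_nonneg fun i _ => Finset.sum_nonneg fun j _ => abs_nonneg _)
      exact mul_le_mul (mul_le_mul_of_nonneg_left (hedb t ht) hCR0) (heb t ht) (norm_nonneg _)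
        (mul_nonneg hCR0 (le_trans (norm_nonneg _) (hedb t ht)))
    · refine (quad_abs_le R (e t) (ed t)).trans ?_
      rw [← hCR]
      have hCR0 : 0 ≤ CR := hCR ▸ (Finset.sum_nonneg fun i _ => Finset.sum_nonneg fun j _ => abs_nonneg _)
      exact mul_le_mul (mul_le_mul_of_nonneg_left (heb t ht) hCR0) (hedb t ht) (norm_nonneg _)
        (mul_nonneg hCR0 (le_trans (norm_nonneg _) (heb t ht)))
  -- Lipschitz bound for h on [0,∞)
  have hLip : ∀ t ∈ Set.Ici (0:ℝ), ∀ t' ∈ Set.Ici (0:ℝ), |h t' - h t| ≤ K * |t' - t| := by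
    intro t ht t' ht'
    have := Convex.norm_image_sub_le_of_norm_hasDerivWithin_le
      (f := h) (f' := dh) (s := Set.Ici (0:ℝ)) (C := K)
      (fun x hx => (hhd x hx).hasDerivWithinAt) (fun x hx => hdhb x hx) (convex_Ici 0) ht ht'
    simpa [Real.norm_eq_abs] using this
  have hK0 : 0 ≤ K := le_trans (abs_nonneg _) (hdhb 0 le_rfl)
  -- Barbalat-type argument: h → 0
  have hLbdd : BddBelow (V '' Set.Ici 0) := ⟨0, fun y ⟨t, _, hty⟩ => hty ▸ hV0 t⟩
  have hLne : (V '' Set.Ici 0).Nonempty := ⟨V 0, 0, Set.self_mem_Ici, rfl⟩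
  set L : ℝ := sInf (V '' Set.Ici 0) with hL
  have hLlb : ∀ t ≥ (0:ℝ), L ≤ V t := fun t ht => csInf_le hLbdd ⟨t, ht, rfl⟩
  have hhto : ∀ ε > (0:ℝ), ∃ T ≥ (0:ℝ), ∀ t ≥ T, h t < ε := by
    intro ε hε
    set K' : ℝ := K + 1 with hK'
    have hK'0 : 0 < K' := by rw [hK']; linarith
    set δ : ℝ := ε / (2 * K') with hδ
    have hδ0 : 0 < δ := div_pos hε (by linarith)
    have hK'ne : K' ≠ 0 := ne_of_gt hK'0
    have hK'δ : K' * δ = ε / 2 := by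
      rw [hδ]; field_simp
    set ε' : ℝ := δ * ε / 2 with hε'
    have hε'0 : 0 < ε' := div_pos (mul_pos hδ0 hε) two_pos
    obtain ⟨y, ⟨t₀, ht₀, rfl⟩, hy⟩ := exists_lt_of_csInf_lt hLne (lt_add_of_pos_right L hε'0)
    refine ⟨t₀, ht₀, fun t htt₀ => ?_⟩
    have ht0 : (0:ℝ) ≤ t := le_trans ht₀ htt₀
    by_contra hcon
    push_neg at hcon
    -- h s ≥ ε/2 on [t, t+δ]
    have hhalf : ∀ s ∈ Set.Icc t (t + δ), ε / 2 ≤ h s := by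
      intro s hs
      have hs0 : (0:ℝ) ≤ s := le_trans ht0 hs.1
      have habs : |h s - h t| ≤ K' * δ := by
        refine (hLip t ht0 s hs0).trans ?_
        have h1 : |s - t| ≤ δ := by
          rw [abs_of_nonneg (by linarith [hs.1])]
          linarith [hs.2]
        calc K * |s - t| ≤ K' * |s - t| :=
              mul_le_mul_of_nonneg_right (by rw [hK']; linarith) (abs_nonneg _)
          _ ≤ K' * δ := mul_le_mul_of_nonneg_left h1 hK'0.le
      rw [hK'δ] at habs
      have := abs_le.1 habs
      linarith [hcon]
    -- V decreases by at least ε' over [t, t+δ]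
    have hdec : V t - V (t + δ) ≥ ε' := by
      have hlin : ∀ s : ℝ, HasDerivAt (fun y : ℝ => (ε / 2) * y) (ε / 2) s := fun s => by
        simpa using (hasDerivAt_id s).const_mul (ε / 2)
      have hganti : AntitoneOn (fun s => V s + (ε / 2) * s) (Set.Icc t (t + δ)) := by
        refine antitoneOn_of_deriv_nonpos (convex_Icc _ _) ?_ ?_ ?_
        · intro s hs
          exact (((hVd s (le_trans ht0 hs.1)).add (hlin s)).continuousAt).continuousWithinAt
        · intro s hs
          rw [interior_Icc] at hs
          exact (((hVd s (le_trans ht0 hs.1.le)).add (hlin s)).differentiableAt).differentiableWithinAt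
        · intro s hs
          rw [interior_Icc] at hs
          have hds : HasDerivAt (fun s => V s + ε / 2 * s) _ s := (hVd s (le_trans ht0 hs.1.le)).add (hlin s)
          rw [hds.deriv]
          have := hhalf s ⟨hs.1.le, hs.2.le⟩
          linarith
      have hmono := hganti (Set.left_mem_Icc.2 (by linarith)) (Set.right_mem_Icc.2 (by linarith))
        (by linarith)
      simp only at hmono
      have hcomm : δ * ε / 2 = ε / 2 * δ := by ring
      rw [hε', hcomm]
      linarith
    have hVt : V t ≤ V t₀ := hVanti ht₀ ht0 htt₀
    have hVtd : L ≤ V (t + δ) := hLlb (t + δ) (by linarith)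
    linarith
  -- h tends to 0
  have hhtends : Tendsto h atTop (nhds 0) := by
    rw [Metric.tendsto_atTop]
    intro ε hε
    obtain ⟨T, hT0, hT⟩ := hhto ε hε
    exact ⟨T, fun t ht => by rw [Real.dist_eq, sub_zero, abs_of_nonneg (hh0 t)]; exact hT t ht⟩
  -- conclude: e → 0
  rw [tendsto_zero_iff_norm_tendsto_zero]
  have hsq : Tendsto (fun t => Real.sqrt (h t / cR)) atTop (nhds 0) := by
    have h1 : Tendsto (fun t => h t / cR) atTop (nhds 0) := by
      simpa using hhtends.div_const cR
    have := (Real.continuous_sqrt.tendsto 0).comp h1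
    simpa [Function.comp_def] using this
  refine squeeze_zero (fun t => norm_nonneg _) (fun t => ?_) hsq
  have h1 : cR * ‖e t‖ ^ 2 ≤ h t := hQR (e t)
  have h2 : ‖e t‖ ^ 2 ≤ h t / cR := (le_div_iff₀' hcR).2 h1
  rw [← Real.sqrt_sq (norm_nonneg (e t))]
  exact Real.sqrt_le_sqrt h2
end
end

section
/- (Derivative identity in the proof of Theorem 5.1) Along the modified error dynamics, for all t ≥ 0, d/dt V*(e(t), W̃(t), e_L(t), x̃(t)) = −e(t)ᵀ R e(t) − η^{-1} κ e_L(t)ᵀ R e_L(t) − 2ξ κ^{-1} λ_max(P)^{-1} λ_min(R) x̃(t)ᵀ R x̃(t) − 2κ e_H(t)ᵀ P e_H(t) + 4ξ λ_max(P)^{-1} λ_min(R) x̃(t)ᵀ P e_H(t), where e_H(t) := e(t) − e_L(t) is the high-frequency content of the system error. -/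
open Matrix Filter

noncomputable section

lemma quadDeriv {n : ℕ} (P : Matrix (Fin n) (Fin n) ℝ) {f : ℝ → Fin n → ℝ} {v : Fin n → ℝ} {t : ℝ}
    (hf : HasDerivAt f v t) :
    HasDerivAt (fun s => f s ⬝ᵥ P *ᵥ f s) (v ⬝ᵥ P *ᵥ f t + f t ⬝ᵥ P *ᵥ v) t := by
  have hfi : ∀ i, HasDerivAt (fun s => f s i) (v i) t := fun i => hasDerivAt_pi.mp hf i
  have h : HasDerivAt (fun s => ∑ i, f s i * ∑ j, P i j * f s j)
      (∑ i, (v i * ∑ j, P i j * f t j + f t i * ∑ j, P i j * v j)) t := by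
    apply HasDerivAt.fun_sum
    intro i _
    exact (hfi i).mul (HasDerivAt.fun_sum fun j _ => (hfi j).const_mul (P i j))
  have hfun : (fun s => f s ⬝ᵥ P *ᵥ f s) = fun s => ∑ i, f s i * ∑ j, P i j * f s j := by
    funext s; simp [dotProduct, mulVec]
  have hval : v ⬝ᵥ P *ᵥ f t + f t ⬝ᵥ P *ᵥ v
      = ∑ i, (v i * ∑ j, P i j * f t j + f t i * ∑ j, P i j * v j) := by
    simp [dotProduct, mulVec, Finset.sum_add_distrib]
  rw [hfun, hval]; exact h

lemma traceDeriv {N m : ℕ} (L : Matrix (Fin m) (Fin m) ℝ) {W : ℝ → Matrix (Fin N) (Fin m) ℝ}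
    {V : Matrix (Fin N) (Fin m) ℝ} {t : ℝ}
    (hW : ∀ i j, HasDerivAt (fun s => W s i j) (V i j) t) :
    HasDerivAt (fun s => ((W s * L)ᵀ * (W s * L)).trace)
      (((V * L)ᵀ * (W t * L)).trace + ((W t * L)ᵀ * (V * L)).trace) t := by
  have key : ∀ (i : Fin N) (j : Fin m),
      HasDerivAt (fun s => ∑ k, W s i k * L k j) (∑ k, V i k * L k j) t :=
    fun i j => HasDerivAt.fun_sum fun k _ => (hW i k).mul_const (L k j)
  have h : HasDerivAt (fun s => ∑ j, ∑ i, (∑ k, W s i k * L k j) * (∑ k, W s i k * L k j))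
      (∑ j, ∑ i, ((∑ k, V i k * L k j) * (∑ k, W t i k * L k j)
        + (∑ k, W t i k * L k j) * (∑ k, V i k * L k j))) t := by
    apply HasDerivAt.fun_sum; intro j _; apply HasDerivAt.fun_sum; intro i _
    exact (key i j).mul (key i j)
  have hfun : (fun s => ((W s * L)ᵀ * (W s * L)).trace)
      = fun s => ∑ j, ∑ i, (∑ k, W s i k * L k j) * (∑ k, W s i k * L k j) := by
    funext s; simp [Matrix.trace, Matrix.diag, Matrix.mul_apply, mul_comm]
  have hval : ((V * L)ᵀ * (W t * L)).trace + ((W t * L)ᵀ * (V * L)).trace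
      = ∑ j, ∑ i, ((∑ k, V i k * L k j) * (∑ k, W t i k * L k j)
        + (∑ k, W t i k * L k j) * (∑ k, V i k * L k j)) := by
    simp [Matrix.trace, Matrix.diag, Matrix.mul_apply, Finset.sum_add_distrib, mul_comm]
  rw [hfun, hval]; exact h

lemma adjdp {n : ℕ} (A : Matrix (Fin n) (Fin n) ℝ) (x y : Fin n → ℝ) :
    (A *ᵥ x) ⬝ᵥ y = x ⬝ᵥ (Aᵀ *ᵥ y) := by
  rw [dotProduct_comm, dotProduct_mulVec, ← mulVec_transpose, dotProduct_comm]

theorem statement4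
    {n N m : ℕ} (hn : 0 < n) (hN : 0 < N) (hm : 0 < m)
    (Ar : Matrix (Fin n) (Fin n) ℝ) (B : Matrix (Fin n) (Fin m) ℝ)
    (Lam Lhalf : Matrix (Fin m) (Fin m) ℝ) (R P : Matrix (Fin n) (Fin n) ℝ)
    (hAr : Hurwitz Ar)
    (hLam : Lam.PosDef) (hLamDiag : Lam.IsDiag)
    (hLhalfDiag : Lhalf.IsDiag) (hLhalfSq : Lhalf * Lhalf = Lam)
    (hR : R.PosDef) (hP : P.PosDef)
    (hLyap : Arᵀ * P + P * Ar + R = 0)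
    (γ κ η ξ : ℝ) (hγ : 0 < γ) (hκ : 0 < κ) (hη : 0 < η) (hξ0 : 0 < ξ) (hξ1 : ξ < 1)
    (σx : ℝ → Fin N → ℝ)
    (e eL xt : ℝ → Fin n → ℝ) (Wt : ℝ → Matrix (Fin N) (Fin m) ℝ)
    (heL0 : eL 0 = 0) (hxt0 : xt 0 = 0)
    (he : ∀ t ≥ (0:ℝ), HasDerivAt e
          (Ar *ᵥ e t - (B * Lam * (Wt t)ᵀ) *ᵥ σx t - κ • (e t - eL t)) t)
    (hW : ∀ t ≥ (0:ℝ), ∀ i j, HasDerivAt (fun s => Wt s i j)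
          (γ * (σx t i * ((e t) ᵥ* (P * B)) j)) t)
    (heL : ∀ t ≥ (0:ℝ), HasDerivAt eL (Ar *ᵥ eL t + η • (e t - eL t)) t)
    (hxt : ∀ t ≥ (0:ℝ), HasDerivAt xt (Ar *ᵥ xt t + κ • (e t - eL t)) t)
    : ∀ t ≥ (0:ℝ),
      HasDerivAt (fun s => Vstar γ κ η ξ P R hP.1 hR.1 Lhalf (e s) (Wt s) (eL s) (xt s))
        (-(e t ⬝ᵥ (R *ᵥ e t)) - η⁻¹ * κ * (eL t ⬝ᵥ (R *ᵥ eL t))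
          - 2 * ξ * κ⁻¹ * (lamMax hP.1)⁻¹ * lamMin hR.1 * (xt t ⬝ᵥ (R *ᵥ xt t))
          - 2 * κ * ((e t - eL t) ⬝ᵥ (P *ᵥ (e t - eL t)))
          + 4 * ξ * (lamMax hP.1)⁻¹ * lamMin hR.1 * (xt t ⬝ᵥ (P *ᵥ (e t - eL t)))) t := by
  
  intro t ht
  have hγ0 : γ ≠ 0 := ne_of_gt hγ
  have hκ0 : κ ≠ 0 := ne_of_gt hκ
  have hη0 : η ≠ 0 := ne_of_gt hη
  have hPsym : Pᵀ = P := by simpa [Matrix.IsSymm] using hP.1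
  have hLs : Lhalfᵀ = Lhalf := hLhalfDiag.isSymm
  have hLamS : Lamᵀ = Lam := by rw [← hLhalfSq, transpose_mul, hLs]
  have hAPR : Arᵀ * P + P * Ar = -R := eq_neg_of_add_eq_zero_left hLyap
  have hsym : ∀ x y : Fin n → ℝ, x ⬝ᵥ (P *ᵥ y) = y ⬝ᵥ (P *ᵥ x) := by
    intro x y; rw [dotProduct_comm, adjdp, hPsym]
  have hcomb : ∀ x : Fin n → ℝ,
      (Ar *ᵥ x) ⬝ᵥ (P *ᵥ x) + x ⬝ᵥ (P *ᵥ (Ar *ᵥ x)) = -(x ⬝ᵥ (R *ᵥ x)) := by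
    intro x
    rw [adjdp, mulVec_mulVec, mulVec_mulVec, ← dotProduct_add, ← add_mulVec, hAPR,
      neg_mulVec, dotProduct_neg]
  set u : Fin m → ℝ := (e t) ᵥ* (P * B) with hu
  set Vm : Matrix (Fin N) (Fin m) ℝ := γ • Matrix.vecMulVec (σx t) u with hVm
  have h1 := quadDeriv P (he t ht)
  have h3 := quadDeriv P (heL t ht)
  have h4 := quadDeriv P (hxt t ht)
  have hWm : ∀ i j, HasDerivAt (fun s => Wt s i j) (Vm i j) t := by
    intro i j
    have h := hW t ht i j
    simpa [hVm, Matrix.vecMulVec_apply] using h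
  have h2 := traceDeriv Lhalf hWm
  have htot := ((h1.add (h2.const_mul γ⁻¹)).add (h3.const_mul (η⁻¹ * κ))).add
      (h4.const_mul (2 * ξ * κ⁻¹ * (lamMax hP.1)⁻¹ * lamMin hR.1))
  have g1 : (Ar *ᵥ e t - (B * Lam * (Wt t)ᵀ) *ᵥ σx t - κ • (e t - eL t)) ⬝ᵥ P *ᵥ e t
      + e t ⬝ᵥ P *ᵥ (Ar *ᵥ e t - (B * Lam * (Wt t)ᵀ) *ᵥ σx t - κ • (e t - eL t))
      = -(e t ⬝ᵥ (R *ᵥ e t)) - 2 * (e t ⬝ᵥ P *ᵥ ((B * Lam * (Wt t)ᵀ) *ᵥ σx t))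
        - 2 * κ * (e t ⬝ᵥ P *ᵥ (e t - eL t)) := by
    simp only [sub_dotProduct, dotProduct_sub, smul_dotProduct, dotProduct_smul,
      mulVec_sub, mulVec_smul, smul_eq_mul]
    linear_combination hcomb (e t) + hsym (e t) ((B * Lam * (Wt t)ᵀ) *ᵥ σx t)
      + κ * hsym (eL t) (e t)
  have g3 : (Ar *ᵥ eL t + η • (e t - eL t)) ⬝ᵥ P *ᵥ eL t
      + eL t ⬝ᵥ P *ᵥ (Ar *ᵥ eL t + η • (e t - eL t))
      = -(eL t ⬝ᵥ (R *ᵥ eL t)) + 2 * η * (eL t ⬝ᵥ P *ᵥ (e t - eL t)) := by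
    simp only [add_dotProduct, dotProduct_add, smul_dotProduct, dotProduct_smul,
      mulVec_add, mulVec_smul, smul_eq_mul, sub_dotProduct, dotProduct_sub, mulVec_sub]
    linear_combination hcomb (eL t) + η * hsym (e t) (eL t)
  have g4 : (Ar *ᵥ xt t + κ • (e t - eL t)) ⬝ᵥ P *ᵥ xt t
      + xt t ⬝ᵥ P *ᵥ (Ar *ᵥ xt t + κ • (e t - eL t))
      = -(xt t ⬝ᵥ (R *ᵥ xt t)) + 2 * κ * (xt t ⬝ᵥ P *ᵥ (e t - eL t)) := by
    simp only [add_dotProduct, dotProduct_add, smul_dotProduct, dotProduct_smul,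
      mulVec_add, mulVec_smul, smul_eq_mul, sub_dotProduct, dotProduct_sub, mulVec_sub]
    linear_combination hcomb (xt t) + κ * hsym (e t) (xt t) + κ * hsym (xt t) (eL t)
  have hXt : (Matrix.vecMulVec (σx t) u)ᵀ = Matrix.vecMulVec u (σx t) := by
    ext i j; simp [Matrix.vecMulVec_apply, mul_comm]
  have htr2 : ((Wt t * Lhalf)ᵀ * (Vm * Lhalf)).trace
      = ((Vm * Lhalf)ᵀ * (Wt t * Lhalf)).trace := by
    rw [← Matrix.trace_transpose ((Wt t * Lhalf)ᵀ * (Vm * Lhalf)), transpose_mul,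
      transpose_transpose]
  have e5 : e t ⬝ᵥ P *ᵥ ((B * Lam * (Wt t)ᵀ) *ᵥ σx t)
      = u ⬝ᵥ ((Lam * (Wt t)ᵀ) *ᵥ σx t) := by
    rw [mulVec_mulVec, dotProduct_mulVec, dotProduct_mulVec, hu, Matrix.vecMul_vecMul]
    congr 2
    simp [Matrix.mul_assoc]
  have htr1 : ((Vm * Lhalf)ᵀ * (Wt t * Lhalf)).trace
      = γ * (e t ⬝ᵥ P *ᵥ ((B * Lam * (Wt t)ᵀ) *ᵥ σx t)) := by
    have e1 : ((Vm * Lhalf)ᵀ * (Wt t * Lhalf)).trace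
        = γ * (((Matrix.vecMulVec (σx t) u * Lhalf)ᵀ * (Wt t * Lhalf)).trace) := by
      rw [hVm, Matrix.smul_mul, Matrix.transpose_smul, Matrix.smul_mul, Matrix.trace_smul,
        smul_eq_mul]
    have e2 : ((Matrix.vecMulVec (σx t) u * Lhalf)ᵀ * (Wt t * Lhalf)).trace
        = ((Matrix.vecMulVec u (σx t)) * (Wt t * Lam)).trace := by
      rw [transpose_mul, hLs, hXt, Matrix.mul_assoc, Matrix.trace_mul_comm, Matrix.mul_assoc,
        Matrix.mul_assoc, hLhalfSq]
    have e3 : ((Matrix.vecMulVec u (σx t)) * (Wt t * Lam)).trace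
        = u ⬝ᵥ ((σx t) ᵥ* (Wt t * Lam)) := by
      simp [Matrix.trace, Matrix.diag, Matrix.mul_apply, Matrix.vecMulVec_apply,
        dotProduct, Matrix.vecMul, Finset.mul_sum, mul_assoc]
    have e4 : (σx t) ᵥ* (Wt t * Lam) = (Lam * (Wt t)ᵀ) *ᵥ σx t := by
      rw [← Matrix.mulVec_transpose, transpose_mul, hLamS]
    rw [e1, e2, e3, e4, e5]
  have g2 : γ⁻¹ * (((Vm * Lhalf)ᵀ * (Wt t * Lhalf)).trace
        + ((Wt t * Lhalf)ᵀ * (Vm * Lhalf)).trace)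
      = 2 * (e t ⬝ᵥ P *ᵥ ((B * Lam * (Wt t)ᵀ) *ᵥ σx t)) := by
    rw [htr2, htr1]; field_simp; ring
  have hval : (-(e t ⬝ᵥ (R *ᵥ e t)) - η⁻¹ * κ * (eL t ⬝ᵥ (R *ᵥ eL t))
          - 2 * ξ * κ⁻¹ * (lamMax hP.1)⁻¹ * lamMin hR.1 * (xt t ⬝ᵥ (R *ᵥ xt t))
          - 2 * κ * ((e t - eL t) ⬝ᵥ (P *ᵥ (e t - eL t)))
          + 4 * ξ * (lamMax hP.1)⁻¹ * lamMin hR.1 * (xt t ⬝ᵥ (P *ᵥ (e t - eL t))))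
      = ((Ar *ᵥ e t - (B * Lam * (Wt t)ᵀ) *ᵥ σx t - κ • (e t - eL t)) ⬝ᵥ P *ᵥ e t
          + e t ⬝ᵥ P *ᵥ (Ar *ᵥ e t - (B * Lam * (Wt t)ᵀ) *ᵥ σx t - κ • (e t - eL t))
          + γ⁻¹ * (((Vm * Lhalf)ᵀ * (Wt t * Lhalf)).trace
            + ((Wt t * Lhalf)ᵀ * (Vm * Lhalf)).trace)
          + η⁻¹ * κ * ((Ar *ᵥ eL t + η • (e t - eL t)) ⬝ᵥ P *ᵥ eL t
            + eL t ⬝ᵥ P *ᵥ (Ar *ᵥ eL t + η • (e t - eL t)))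
          + 2 * ξ * κ⁻¹ * (lamMax hP.1)⁻¹ * lamMin hR.1
            * ((Ar *ᵥ xt t + κ • (e t - eL t)) ⬝ᵥ P *ᵥ xt t
              + xt t ⬝ᵥ P *ᵥ (Ar *ᵥ xt t + κ • (e t - eL t)))) := by
    rw [g1, g2, g3, g4, sub_dotProduct]
    have hκ1 : κ⁻¹ * κ = 1 := inv_mul_cancel₀ hκ0
    have hη1 : η⁻¹ * η = 1 := inv_mul_cancel₀ hη0
    linear_combination (-(2 * κ * (eL t ⬝ᵥ P *ᵥ (e t - eL t)))) * hη1
      + (-(4 * ξ * (lamMax hP.1)⁻¹ * lamMin hR.1 * (xt t ⬝ᵥ P *ᵥ (e t - eL t)))) * hκ1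
  rw [show (fun s => Vstar γ κ η ξ P R hP.1 hR.1 Lhalf (e s) (Wt s) (eL s) (xt s))
      = (fun s => e s ⬝ᵥ P *ᵥ e s + γ⁻¹ * ((Wt s * Lhalf)ᵀ * (Wt s * Lhalf)).trace
          + η⁻¹ * κ * (eL s ⬝ᵥ P *ᵥ eL s)
          + 2 * ξ * κ⁻¹ * (lamMax hP.1)⁻¹ * lamMin hR.1 * (xt s ⬝ᵥ P *ᵥ xt s)) from rfl,
    hval]
  exact htot
end
end

section
/- (Derivative inequality in the proof of Theorem 5.1) Along the modified error dynamics, for all t ≥ 0, d/dt V*(e(t), W̃(t), e_L(t), x̃(t)) ≤ −λ_min(R) ‖e(t)‖₂² − η^{-1} κ λ_min(R) ‖e_L(t)‖₂² − 2ξ κ^{-1} λ_min(R)² λ_max(P)^{-1} (1 − ξ) ‖x̃(t)‖₂² ≤ 0. -/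
open Matrix Filter

noncomputable section

/-! ### Auxiliary lemmas -/

lemma hasDerivAt_quad {n : ℕ} (P : Matrix (Fin n) (Fin n) ℝ) {u v : ℝ → Fin n → ℝ}
    {u' v' : Fin n → ℝ} {t : ℝ} (hu : HasDerivAt u u' t) (hv : HasDerivAt v v' t) :
    HasDerivAt (fun s => u s ⬝ᵥ (P *ᵥ v s)) (u' ⬝ᵥ (P *ᵥ v t) + u t ⬝ᵥ (P *ᵥ v')) t := by
  have h : HasDerivAt (fun s => ∑ i, u s i * ∑ j, P i j * v s j)
      (∑ i, (u' i * ∑ j, P i j * v t j + u t i * ∑ j, P i j * v' j)) t := by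
    apply HasDerivAt.fun_sum
    intro i _
    exact (hasDerivAt_pi.mp hu i).mul
      (HasDerivAt.fun_sum fun j _ => (hasDerivAt_pi.mp hv j).const_mul (P i j))
  have e1 : (fun s => ∑ i, u s i * ∑ j, P i j * v s j) = fun s => u s ⬝ᵥ (P *ᵥ v s) := by
    funext s; simp [dotProduct, Matrix.mulVec]
  have e2 : (∑ i, (u' i * ∑ j, P i j * v t j + u t i * ∑ j, P i j * v' j))
      = u' ⬝ᵥ (P *ᵥ v t) + u t ⬝ᵥ (P *ᵥ v') := by
    simp [dotProduct, Matrix.mulVec, Finset.sum_add_distrib]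
  rw [← e1, ← e2]
  exact h

lemma trace_eq_sum {N m : ℕ} (A B : Matrix (Fin N) (Fin m) ℝ) :
    (Aᵀ * B).trace = ∑ k, ∑ i, A i k * B i k := by
  simp [Matrix.trace, Matrix.mul_apply, Matrix.diag]

lemma hasDerivAt_traceTerm {N m : ℕ} (L : Matrix (Fin m) (Fin m) ℝ)
    {W : ℝ → Matrix (Fin N) (Fin m) ℝ} {W' : Matrix (Fin N) (Fin m) ℝ} {t : ℝ}
    (hW : ∀ i j, HasDerivAt (fun s => W s i j) (W' i j) t) :
    HasDerivAt (fun s => ((W s * L)ᵀ * (W s * L)).trace)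
      (2 * ((W t * L)ᵀ * (W' * L)).trace) t := by
  have hg : ∀ i k, HasDerivAt (fun s => ∑ j, W s i j * L j k) (∑ j, W' i j * L j k) t :=
    fun i k => HasDerivAt.fun_sum fun j _ => (hW i j).mul_const (L j k)
  have h : HasDerivAt (fun s => ∑ k, ∑ i, (∑ j, W s i j * L j k) * (∑ j, W s i j * L j k))
      (∑ k, ∑ i, ((∑ j, W' i j * L j k) * (∑ j, W t i j * L j k)
        + (∑ j, W t i j * L j k) * (∑ j, W' i j * L j k))) t :=
    HasDerivAt.fun_sum fun k _ => HasDerivAt.fun_sum fun i _ => (hg i k).mul (hg i k)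
  have e1 : (fun s => ∑ k, ∑ i, (∑ j, W s i j * L j k) * (∑ j, W s i j * L j k))
      = fun s => ((W s * L)ᵀ * (W s * L)).trace := by
    funext s; rw [trace_eq_sum]; simp [Matrix.mul_apply]
  have e2 : (∑ k, ∑ i, ((∑ j, W' i j * L j k) * (∑ j, W t i j * L j k)
        + (∑ j, W t i j * L j k) * (∑ j, W' i j * L j k)))
      = 2 * ((W t * L)ᵀ * (W' * L)).trace := by
    rw [trace_eq_sum, Finset.mul_sum]
    refine Finset.sum_congr rfl fun k _ => ?_
    rw [Finset.mul_sum]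
    refine Finset.sum_congr rfl fun i _ => ?_
    simp [Matrix.mul_apply]; ring
  rw [← e1, ← e2]
  exact h

lemma dot_symm {n : ℕ} {P : Matrix (Fin n) (Fin n) ℝ} (hP : Pᵀ = P) (y z : Fin n → ℝ) :
    z ⬝ᵥ (P *ᵥ y) = y ⬝ᵥ (P *ᵥ z) := by
  rw [Matrix.dotProduct_mulVec, ← Matrix.vecMul_transpose, hP, dotProduct_comm]

lemma lyap_pair {n : ℕ} {Ar P R : Matrix (Fin n) (Fin n) ℝ}
    (hP : Pᵀ = P) (hLyap : Arᵀ * P + P * Ar + R = 0) (y z : Fin n → ℝ) :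
    (Ar *ᵥ y + z) ⬝ᵥ (P *ᵥ y) + y ⬝ᵥ (P *ᵥ (Ar *ᵥ y + z))
      = -(y ⬝ᵥ (R *ᵥ y)) + 2 * (y ⬝ᵥ (P *ᵥ z)) := by
  have hsum : Arᵀ * P + P * Ar = -R := by
    have : Arᵀ * P + P * Ar + R - R = 0 - R := by rw [hLyap]
    simpa using this
  have h1 : (Ar *ᵥ y) ⬝ᵥ (P *ᵥ y) = y ⬝ᵥ ((Arᵀ * P) *ᵥ y) := by
    rw [← Matrix.vecMul_transpose, Matrix.dotProduct_mulVec, Matrix.vecMul_vecMul,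
      ← Matrix.dotProduct_mulVec]
  have h2 : y ⬝ᵥ (P *ᵥ (Ar *ᵥ y)) = y ⬝ᵥ ((P * Ar) *ᵥ y) := by
    rw [Matrix.mulVec_mulVec]
  have h3 : z ⬝ᵥ (P *ᵥ y) = y ⬝ᵥ (P *ᵥ z) := dot_symm hP y z
  rw [add_dotProduct, Matrix.mulVec_add, dotProduct_add, h1, h2, h3]
  have h4 : y ⬝ᵥ ((Arᵀ * P) *ᵥ y) + y ⬝ᵥ ((P * Ar) *ᵥ y) = -(y ⬝ᵥ (R *ᵥ y)) := by
    rw [← dotProduct_add, ← Matrix.add_mulVec, hsum]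
    simp [Matrix.neg_mulVec]
  ring_nf
  ring_nf at h4
  linarith

lemma cross_cancel {n N m : ℕ} (P : Matrix (Fin n) (Fin n) ℝ) (B : Matrix (Fin n) (Fin m) ℝ)
    (Lam L : Matrix (Fin m) (Fin m) ℝ) (W : Matrix (Fin N) (Fin m) ℝ)
    (hLdiag : L.IsDiag) (hLsq : L * L = Lam) (σ : Fin N → ℝ) (a : Fin n → ℝ) :
    ((W * L)ᵀ * ((vecMulVec σ (a ᵥ* (P * B))) * L)).trace
      = a ⬝ᵥ (P *ᵥ ((B * Lam * Wᵀ) *ᵥ σ)) := by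
  have hLT : Lᵀ = L := by
    ext i j
    by_cases h : i = j
    · subst h; rfl
    · rw [Matrix.transpose_apply, hLdiag (fun hc => h hc.symm), hLdiag h]
  set p := a ᵥ* (P * B) with hp
  have lhs : ((W * L)ᵀ * ((vecMulVec σ p) * L)).trace = σ ⬝ᵥ (p ᵥ* (Lam * Wᵀ)) := by
    rw [Matrix.transpose_mul, Matrix.trace_mul_comm]
    have : vecMulVec σ p * L * (Lᵀ * Wᵀ) = Matrix.replicateCol Unit σ * Matrix.replicateRow Unit (p ᵥ* (Lam * Wᵀ)) := by
      rw [hLT, Matrix.vecMulVec_eq Unit, Matrix.replicateRow_vecMul, Matrix.replicateRow_vecMul]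
      rw [Matrix.mul_assoc, Matrix.mul_assoc, Matrix.mul_assoc]
      rw [← Matrix.mul_assoc L L Wᵀ, hLsq]
      simp only [Matrix.mul_assoc]
      rw [hp, Matrix.replicateRow_vecMul]
      simp only [Matrix.mul_assoc]
    rw [this, Matrix.trace_replicateCol_mul_replicateRow]
  rw [lhs, Matrix.mulVec_mulVec, Matrix.dotProduct_mulVec, dotProduct_comm, hp,
    Matrix.vecMul_vecMul]
  simp only [Matrix.mul_assoc]

lemma quad_repr {n : ℕ} {A : Matrix (Fin n) (Fin n) ℝ} (hA : A.IsHermitian) (x : Fin n → ℝ) :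
    ∃ y : Fin n → ℝ, (∑ i, y i ^ 2) = (∑ i, x i ^ 2) ∧
      x ⬝ᵥ (A *ᵥ x) = ∑ i, hA.eigenvalues i * y i ^ 2 := by
  set U : Matrix (Fin n) (Fin n) ℝ := (hA.eigenvectorUnitary : Matrix (Fin n) (Fin n) ℝ) with hU
  have hstar : star U = Uᵀ := by
    rw [Matrix.star_eq_conjTranspose]
    ext i j
    simp [Matrix.conjTranspose_apply]
  have hUU : U * Uᵀ = 1 := by
    rw [← hstar]
    exact (Matrix.mem_unitaryGroup_iff).mp (hA.eigenvectorUnitary).2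
  refine ⟨Uᵀ *ᵥ x, ?_, ?_⟩
  · have : (Uᵀ *ᵥ x) ⬝ᵥ (Uᵀ *ᵥ x) = x ⬝ᵥ x := by
      rw [Matrix.mulVec_transpose, ← Matrix.dotProduct_mulVec, ← Matrix.mulVec_transpose,
        Matrix.mulVec_mulVec, hUU, Matrix.one_mulVec]
    simpa [dotProduct, pow_two] using this
  · conv_lhs => rw [hA.spectral_theorem, Unitary.conjStarAlgAut_apply, ← hU]
    rw [hstar, ← Matrix.mulVec_mulVec, ← Matrix.mulVec_mulVec, Matrix.dotProduct_mulVec,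
      ← Matrix.mulVec_transpose]
    have : (Matrix.diagonal (RCLike.ofReal ∘ hA.eigenvalues) : Matrix (Fin n) (Fin n) ℝ)
        = Matrix.diagonal hA.eigenvalues := by
      congr 1
    rw [this]
    simp only [dotProduct, Matrix.mulVec_diagonal, pow_two, ← hU]
    exact Finset.sum_congr rfl fun i _ => by ring

lemma quad_lower_s5 {n : ℕ} {A : Matrix (Fin n) (Fin n) ℝ} (hA : A.IsHermitian) {c : ℝ}
    (hc : ∀ i, c ≤ hA.eigenvalues i) (x : Fin n → ℝ) :
    c * (∑ i, x i ^ 2) ≤ x ⬝ᵥ (A *ᵥ x) := by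
  obtain ⟨y, hy, hq⟩ := quad_repr hA x
  rw [hq, ← hy, Finset.mul_sum]
  exact Finset.sum_le_sum fun i _ => mul_le_mul_of_nonneg_right (hc i) (sq_nonneg _)

lemma quad_upper {n : ℕ} {A : Matrix (Fin n) (Fin n) ℝ} (hA : A.IsHermitian) {c : ℝ}
    (hc : ∀ i, hA.eigenvalues i ≤ c) (x : Fin n → ℝ) :
    x ⬝ᵥ (A *ᵥ x) ≤ c * (∑ i, x i ^ 2) := by
  obtain ⟨y, hy, hq⟩ := quad_repr hA x
  rw [hq, ← hy, Finset.mul_sum]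
  exact Finset.sum_le_sum fun i _ => mul_le_mul_of_nonneg_right (hc i) (sq_nonneg _)

lemma lamMin_le' {n : ℕ} {A : Matrix (Fin n) (Fin n) ℝ} (hA : A.IsHermitian) (i : Fin n) :
    lamMin hA ≤ hA.eigenvalues i :=
  ciInf_le (Set.Finite.bddBelow (Set.finite_range _)) i

lemma le_lamMax' {n : ℕ} {A : Matrix (Fin n) (Fin n) ℝ} (hA : A.IsHermitian) (i : Fin n) :
    hA.eigenvalues i ≤ lamMax hA :=
  le_ciSup (Set.Finite.bddAbove (Set.finite_range _)) i

lemma lamMin_pos {n : ℕ} (hn : 0 < n) {A : Matrix (Fin n) (Fin n) ℝ} (hA : A.PosDef) :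
    0 < lamMin hA.1 := by
  haveI : Nonempty (Fin n) := ⟨⟨0, hn⟩⟩
  obtain ⟨i, hi⟩ := Finite.exists_min hA.1.eigenvalues
  exact lt_of_lt_of_le (hA.eigenvalues_pos i) (le_ciInf hi)

lemma lamMax_pos {n : ℕ} (hn : 0 < n) {A : Matrix (Fin n) (Fin n) ℝ} (hA : A.PosDef) :
    0 < lamMax hA.1 := by
  haveI : Nonempty (Fin n) := ⟨⟨0, hn⟩⟩
  exact lt_of_lt_of_le (hA.eigenvalues_pos (Classical.arbitrary _)) (le_lamMax' hA.1 _)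

lemma psd_nonneg {n : ℕ} {A : Matrix (Fin n) (Fin n) ℝ} (hA : A.PosSemidef) (x : Fin n → ℝ) :
    0 ≤ x ⬝ᵥ (A *ᵥ x) := by
  have := hA.dotProduct_mulVec_nonneg x
  simpa using this

lemma amgm_quad {n : ℕ} {P : Matrix (Fin n) (Fin n) ℝ} (hPsym : Pᵀ = P)
    (hPS : ∀ z : Fin n → ℝ, 0 ≤ z ⬝ᵥ (P *ᵥ z)) {s : ℝ} (hs : 0 < s) (x d : Fin n → ℝ) :
    2 * (x ⬝ᵥ (P *ᵥ d)) ≤ s * (x ⬝ᵥ (P *ᵥ x)) + s⁻¹ * (d ⬝ᵥ (P *ᵥ d)) := by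
  have hz := hPS (s • x - d)
  have hsymm : d ⬝ᵥ (P *ᵥ x) = x ⬝ᵥ (P *ᵥ d) := dot_symm hPsym x d
  simp only [sub_dotProduct, smul_dotProduct, Matrix.mulVec_sub,
    Matrix.mulVec_smul, dotProduct_sub, dotProduct_smul, smul_eq_mul, hsymm] at hz
  have h1 : 0 ≤ s * s * (x ⬝ᵥ (P *ᵥ x)) - 2 * s * (x ⬝ᵥ (P *ᵥ d)) + d ⬝ᵥ (P *ᵥ d) := by nlinarith
  have hs' : 0 < s⁻¹ := inv_pos.mpr hs
  have key : s⁻¹ * (s * s * (x ⬝ᵥ (P *ᵥ x)) - 2 * s * (x ⬝ᵥ (P *ᵥ d)) + d ⬝ᵥ (P *ᵥ d))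
      = s * (x ⬝ᵥ (P *ᵥ x)) - 2 * (x ⬝ᵥ (P *ᵥ d)) + s⁻¹ * (d ⬝ᵥ (P *ᵥ d)) := by
    field_simp
  have := mul_nonneg hs'.le h1
  rw [key] at this
  linarith
set_option maxHeartbeats 1000000 in
theorem statement5
    {n N m : ℕ} (hn : 0 < n) (hN : 0 < N) (hm : 0 < m)
    (Ar : Matrix (Fin n) (Fin n) ℝ) (B : Matrix (Fin n) (Fin m) ℝ)
    (Lam Lhalf : Matrix (Fin m) (Fin m) ℝ) (R P : Matrix (Fin n) (Fin n) ℝ)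
    (hAr : Hurwitz Ar)
    (hLam : Lam.PosDef) (hLamDiag : Lam.IsDiag)
    (hLhalfDiag : Lhalf.IsDiag) (hLhalfSq : Lhalf * Lhalf = Lam)
    (hR : R.PosDef) (hP : P.PosDef)
    (hLyap : Arᵀ * P + P * Ar + R = 0)
    (γ κ η ξ : ℝ) (hγ : 0 < γ) (hκ : 0 < κ) (hη : 0 < η) (hξ0 : 0 < ξ) (hξ1 : ξ < 1)
    (σx : ℝ → Fin N → ℝ)
    (e eL xt : ℝ → Fin n → ℝ) (Wt : ℝ → Matrix (Fin N) (Fin m) ℝ)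
    (heL0 : eL 0 = 0) (hxt0 : xt 0 = 0)
    (he : ∀ t ≥ (0:ℝ), HasDerivAt e
          (Ar *ᵥ e t - (B * Lam * (Wt t)ᵀ) *ᵥ σx t - κ • (e t - eL t)) t)
    (hW : ∀ t ≥ (0:ℝ), ∀ i j, HasDerivAt (fun s => Wt s i j)
          (γ * (σx t i * ((e t) ᵥ* (P * B)) j)) t)
    (heL : ∀ t ≥ (0:ℝ), HasDerivAt eL (Ar *ᵥ eL t + η • (e t - eL t)) t)
    (hxt : ∀ t ≥ (0:ℝ), HasDerivAt xt (Ar *ᵥ xt t + κ • (e t - eL t)) t)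
    : ∀ t ≥ (0:ℝ),
      deriv (fun s => Vstar γ κ η ξ P R hP.1 hR.1 Lhalf (e s) (Wt s) (eL s) (xt s)) t
        ≤ -(lamMin hR.1) * norm2 (e t) ^ 2 - η⁻¹ * κ * lamMin hR.1 * norm2 (eL t) ^ 2
          - 2 * ξ * κ⁻¹ * lamMin hR.1 ^ 2 * (lamMax hP.1)⁻¹ * (1 - ξ) * norm2 (xt t) ^ 2
      ∧ -(lamMin hR.1) * norm2 (e t) ^ 2 - η⁻¹ * κ * lamMin hR.1 * norm2 (eL t) ^ 2
          - 2 * ξ * κ⁻¹ * lamMin hR.1 ^ 2 * (lamMax hP.1)⁻¹ * (1 - ξ) * norm2 (xt t) ^ 2 ≤ 0 := by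
  intro t ht
  -- positivity facts
  have hlR : 0 < lamMin hR.1 := lamMin_pos hn hR
  have hlP : 0 < lamMax hP.1 := lamMax_pos hn hP
  set lR := lamMin hR.1 with hlamR
  set lP := lamMax hP.1 with hlamP
  set c0 : ℝ := 2 * ξ * κ⁻¹ * lP⁻¹ * lR with hc0
  have hc0pos : 0 < c0 := by
    rw [hc0]; positivity
  have hPsym : Pᵀ = P := by
    ext i j
    have := congrFun (congrFun hP.1 i) j
    simpa [Matrix.conjTranspose_apply, Matrix.transpose_apply] using this
  have hPS : ∀ z : Fin n → ℝ, 0 ≤ z ⬝ᵥ (P *ᵥ z) := psd_nonneg hP.posSemidef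
  -- abbreviations
  set d : Fin n → ℝ := e t - eL t with hdd
  set σ : Fin N → ℝ := σx t with hσ
  set Wc := Wt t with hWc
  set p : Fin m → ℝ := (e t) ᵥ* (P * B) with hpp
  set dWm : Matrix (Fin N) (Fin m) ℝ := γ • vecMulVec σ p with hdWm
  set da : Fin n → ℝ := Ar *ᵥ e t - (B * Lam * Wcᵀ) *ᵥ σ - κ • d with hda
  set db : Fin n → ℝ := Ar *ᵥ eL t + η • d with hdb
  set dx : Fin n → ℝ := Ar *ᵥ xt t + κ • d with hdx
  -- componentwise derivative of W
  have hdWc : ∀ i j, HasDerivAt (fun s => Wt s i j) (dWm i j) t := by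
    intro i j
    have h := hW t ht i j
    have heq : γ * (σ i * p j) = dWm i j := by
      rw [hdWm]
      simp [Matrix.vecMulVec_apply]
    rwa [heq] at h
  -- the full derivative
  have h1 := hasDerivAt_quad P (he t ht) (he t ht)
  have h2 := (hasDerivAt_traceTerm Lhalf hdWc).const_mul γ⁻¹
  have h3 := (hasDerivAt_quad P (heL t ht) (heL t ht)).const_mul (η⁻¹ * κ)
  have h4 := (hasDerivAt_quad P (hxt t ht) (hxt t ht)).const_mul (2 * ξ * κ⁻¹ * lP⁻¹ * lR)
  have hV : HasDerivAt (fun s => Vstar γ κ η ξ P R hP.1 hR.1 Lhalf (e s) (Wt s) (eL s) (xt s))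
      ((da ⬝ᵥ (P *ᵥ e t) + e t ⬝ᵥ (P *ᵥ da)
        + γ⁻¹ * (2 * ((Wc * Lhalf)ᵀ * (dWm * Lhalf)).trace)
        + η⁻¹ * κ * (db ⬝ᵥ (P *ᵥ eL t) + eL t ⬝ᵥ (P *ᵥ db)))
        + 2 * ξ * κ⁻¹ * lP⁻¹ * lR * (dx ⬝ᵥ (P *ᵥ xt t) + xt t ⬝ᵥ (P *ᵥ dx))) t := by
    exact ((h1.add h2).add h3).add h4
  rw [hV.deriv]
  -- scalar abbreviations
  set Qe := e t ⬝ᵥ (R *ᵥ e t) with hQe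
  set QeL := eL t ⬝ᵥ (R *ᵥ eL t) with hQeL
  set Qx := xt t ⬝ᵥ (R *ᵥ xt t) with hQx
  set Qxx := xt t ⬝ᵥ (P *ᵥ xt t) with hQxx
  set Qd := d ⬝ᵥ (P *ᵥ d) with hQd
  set Q3 := xt t ⬝ᵥ (P *ᵥ d) with hQ3
  -- rewrite the first pairing
  have hdaeq : da = Ar *ᵥ e t + (-((B * Lam * Wcᵀ) *ᵥ σ) - κ • d) := by
    funext i
    simp only [hda, Pi.add_apply, Pi.sub_apply, Pi.neg_apply, Pi.smul_apply, smul_eq_mul]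
    ring
  have t1 : da ⬝ᵥ (P *ᵥ e t) + e t ⬝ᵥ (P *ᵥ da)
      = -Qe + 2 * (-(e t ⬝ᵥ (P *ᵥ ((B * Lam * Wcᵀ) *ᵥ σ))) - κ * (e t ⬝ᵥ (P *ᵥ d))) := by
    rw [hdaeq, lyap_pair hPsym hLyap]
    congr 1
    congr 1
    rw [Matrix.mulVec_sub, Matrix.mulVec_neg, Matrix.mulVec_smul, dotProduct_sub,
      dotProduct_neg, dotProduct_smul, smul_eq_mul]
  have t2 : γ⁻¹ * (2 * ((Wc * Lhalf)ᵀ * (dWm * Lhalf)).trace)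
      = 2 * (e t ⬝ᵥ (P *ᵥ ((B * Lam * Wcᵀ) *ᵥ σ))) := by
    rw [hdWm, Matrix.smul_mul, Matrix.mul_smul, Matrix.trace_smul, smul_eq_mul]
    rw [hpp, cross_cancel P B Lam Lhalf Wc hLhalfDiag hLhalfSq σ (e t)]
    field_simp
  have t3 : db ⬝ᵥ (P *ᵥ eL t) + eL t ⬝ᵥ (P *ᵥ db)
      = -QeL + 2 * (η * (eL t ⬝ᵥ (P *ᵥ d))) := by
    rw [hdb, lyap_pair hPsym hLyap]
    rw [Matrix.mulVec_smul, dotProduct_smul, smul_eq_mul]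
  have t4 : dx ⬝ᵥ (P *ᵥ xt t) + xt t ⬝ᵥ (P *ᵥ dx)
      = -Qx + 2 * (κ * Q3) := by
    rw [hdx, lyap_pair hPsym hLyap]
    rw [Matrix.mulVec_smul, dotProduct_smul, smul_eq_mul, hQ3]
  have hQdsplit : Qd = e t ⬝ᵥ (P *ᵥ d) - eL t ⬝ᵥ (P *ᵥ d) := by
    rw [hQd, hdd, sub_dotProduct]
  -- collect
  have hcollect : da ⬝ᵥ (P *ᵥ e t) + e t ⬝ᵥ (P *ᵥ da)
        + γ⁻¹ * (2 * ((Wc * Lhalf)ᵀ * (dWm * Lhalf)).trace)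
        + η⁻¹ * κ * (db ⬝ᵥ (P *ᵥ eL t) + eL t ⬝ᵥ (P *ᵥ db))
        + 2 * ξ * κ⁻¹ * lP⁻¹ * lR * (dx ⬝ᵥ (P *ᵥ xt t) + xt t ⬝ᵥ (P *ᵥ dx))
      = -Qe - η⁻¹ * κ * QeL - c0 * Qx - 2 * κ * Qd + 2 * c0 * κ * Q3 := by
    rw [t1, t2, t3, t4, hQdsplit, hc0]
    field_simp
    ring
  rw [hcollect]
  -- AM-GM step
  have hamgm := amgm_quad hPsym hPS (half_pos hc0pos) (xt t) d
  have hmul := mul_le_mul_of_nonneg_left hamgm (le_of_lt (mul_pos hc0pos hκ))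
  have hsimp : c0 * κ * ((c0 / 2) * Qxx + (c0 / 2)⁻¹ * Qd)
      = (c0 ^ 2 * κ / 2) * Qxx + 2 * κ * Qd := by
    field_simp
  rw [hsimp] at hmul
  rw [← hQ3] at hmul
  -- quadratic form bounds
  have hSe : lR * (∑ i, (e t) i ^ 2) ≤ Qe :=
    quad_lower_s5 hR.1 (fun i => lamMin_le' hR.1 i) (e t)
  have hSeL : lR * (∑ i, (eL t) i ^ 2) ≤ QeL :=
    quad_lower_s5 hR.1 (fun i => lamMin_le' hR.1 i) (eL t)
  have hSx : lR * (∑ i, (xt t) i ^ 2) ≤ Qx :=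
    quad_lower_s5 hR.1 (fun i => lamMin_le' hR.1 i) (xt t)
  have hSxx : Qxx ≤ lP * (∑ i, (xt t) i ^ 2) :=
    quad_upper hP.1 (fun i => le_lamMax' hP.1 i) (xt t)
  have hnorm : ∀ v : Fin n → ℝ, norm2 v ^ 2 = ∑ i, v i ^ 2 := by
    intro v
    rw [norm2, Real.sq_sqrt]
    positivity
  rw [hnorm, hnorm, hnorm]
  set Se := ∑ i, (e t) i ^ 2 with hSe'
  set SeL := ∑ i, (eL t) i ^ 2 with hSeL'
  set Sx := ∑ i, (xt t) i ^ 2 with hSx'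
  have hSxnn : 0 ≤ Sx := by rw [hSx']; positivity
  have hSenn : 0 ≤ Se := by rw [hSe']; positivity
  have hSeLnn : 0 ≤ SeL := by rw [hSeL']; positivity
  clear_value lR lP c0 Qe QeL Qx Qxx Qd Q3 Se SeL Sx
  constructor
  · -- main inequality
    have ineq2 := mul_le_mul_of_nonneg_left hSeL (by positivity : (0:ℝ) ≤ η⁻¹ * κ)
    have ineq3 := mul_le_mul_of_nonneg_left hSx hc0pos.le
    have ineq4 := mul_le_mul_of_nonneg_left hSxx (by positivity : (0:ℝ) ≤ c0 ^ 2 * κ / 2)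
    have hident : -(c0 * (lR * Sx)) + (c0 ^ 2 * κ / 2) * (lP * Sx)
        = -(2 * ξ * κ⁻¹ * lR ^ 2 * lP⁻¹ * (1 - ξ)) * Sx := by
      rw [hc0]
      field_simp
      ring
    linarith [hmul, hSe, ineq2, ineq3, ineq4, hident]
  · -- nonpositivity
    have a1 : 0 ≤ lR * Se := mul_nonneg hlR.le hSenn
    have a2 : 0 ≤ η⁻¹ * κ * lR * SeL :=
      mul_nonneg (mul_nonneg (mul_nonneg (inv_nonneg.mpr hη.le) hκ.le) hlR.le) hSeLnn
    have a3 : 0 ≤ 2 * ξ * κ⁻¹ * lR ^ 2 * lP⁻¹ * (1 - ξ) * Sx := by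
      have h1ξ : 0 ≤ 1 - ξ := by linarith
      have : 0 ≤ 2 * ξ * κ⁻¹ * lR ^ 2 * lP⁻¹ * (1 - ξ) :=
        mul_nonneg (mul_nonneg (mul_nonneg (mul_nonneg (mul_nonneg (by norm_num) hξ0.le)
          (inv_nonneg.mpr hκ.le)) (sq_nonneg _)) (inv_nonneg.mpr hlP.le)) h1ξ
      exact mul_nonneg this hSxnn
    linarith
end
end
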